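/- arXiv:1612.05381 — 4 statements merged into one kernel-verified Lean document; each statement's English description precedes it below -/
import Mathlib

section
/- Let n and p be integers with 0 ≤ p ≤ n − 3. Every connected graph G with n vertices and m = C(n,2) − p edges satisfies tmc(G) ≥ C(n,2) + n − 3p if 0 ≤ p ≤ n/2, and tmc(G) ≥ C(n,2) − p if n/2 < p ≤ n − 3. -/
open SimpleGraph

/-- A walk in a total-colored graph is *total monochromatic* if all of its edges and
internal vertices have the same color. -/
def IsTotalMonoWalk {V : Type*} {G : SimpleGraph V} (ce : Sym2 V → ℕ) (cv : V → ℕ)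
    {u v : V} (w : G.Walk u v) : Prop :=
  ∃ c, (∀ e ∈ w.edges, ce e = c) ∧ ∀ x ∈ w.support.tail.dropLast, cv x = c

/-- A total coloring (edge coloring `ce`, vertex coloring `cv`) of `G` is a
*TMC-coloring* if any two vertices are connected by a total monochromatic path. -/
def IsTMCColoring {V : Type*} (G : SimpleGraph V) (ce : Sym2 V → ℕ) (cv : V → ℕ) : Prop :=
  ∀ u v : V, u ≠ v → ∃ w : G.Walk u v, w.IsPath ∧ IsTotalMonoWalk ce cv w

/-- The number of colors used by a total coloring of `G`:
colors appearing on edges of `G` together with colors appearing on vertices. -/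
noncomputable def colorsUsed {V : Type*} (G : SimpleGraph V) (ce : Sym2 V → ℕ) (cv : V → ℕ) : ℕ :=
  (ce '' G.edgeSet ∪ Set.range cv).ncard

/-- The total monochromatic connection number `tmc G`: the maximum number of colors
used in a TMC-coloring of `G`. -/
noncomputable def tmc {V : Type*} [Fintype V] (G : SimpleGraph V) : ℕ :=
  sSup {k | ∃ ce cv, IsTMCColoring G ce cv ∧ colorsUsed G ce cv = k}

lemma aux_conn_card_le {V : Type*} [Fintype V] (H : SimpleGraph V) [DecidableEq V]
    [DecidableRel H.Adj] (h : H.Connected) :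
    Fintype.card V ≤ H.edgeFinset.card + 1 := by
  obtain ⟨r⟩ := h.nonempty
  have key : ∀ v : V, v ≠ r → ∃ x, H.Adj v x ∧ H.dist x r + 1 = H.dist v r := by
    intro v hv
    have hd : 0 < H.dist v r := (h.preconnected v r).pos_dist_of_ne hv
    obtain ⟨pw, hlen⟩ := (h.preconnected v r).exists_walk_length_eq_dist
    cases pw with
    | nil => exact absurd rfl hv
    | cons hadj q =>
      rename_i x
      refine ⟨x, hadj, ?_⟩
      have h1 : H.dist x r ≤ q.length := dist_le q
      have h2 : H.dist v r ≤ H.dist v x + H.dist x r := h.dist_triangle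
      have h3 : H.dist v x ≤ 1 := by
        simpa using dist_le (Walk.cons hadj Walk.nil)
      simp only [Walk.length_cons] at hlen
      omega
  choose f hf1 hf2 using key
  have hinj : Set.InjOn (fun v => if hv : v = r then s(r, r) else s(v, f v hv))
      ↑(Finset.univ.erase r) := by
    intro a ha b hb hab
    simp only [Finset.coe_erase, Set.mem_diff, Set.mem_singleton_iff] at ha hb
    have ha' : a ≠ r := ha.2
    have hb' : b ≠ r := hb.2
    simp only [dif_neg ha', dif_neg hb'] at hab
    rcases Sym2.eq_iff.mp hab with ⟨h1, _⟩ | ⟨h1, h2⟩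
    · exact h1
    · have e1 := hf2 a ha'
      have e2 := hf2 b hb'
      rw [h2] at e1
      rw [← h1] at e2
      omega
  have hmaps : ∀ a ∈ Finset.univ.erase r,
      (fun v => if hv : v = r then s(r, r) else s(v, f v hv)) a ∈ H.edgeFinset := by
    intro a ha
    have ha' : a ≠ r := Finset.ne_of_mem_erase ha
    simp only [dif_neg ha', mem_edgeFinset, mem_edgeSet]
    exact hf1 a ha'
  have := Finset.card_le_card_of_injOn _ hmaps hinj
  rw [Finset.card_erase_of_mem (Finset.mem_univ r), Finset.card_univ] at this
  have : 0 < Fintype.card V := Fintype.card_pos_iff.mpr ⟨r⟩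
  omega

lemma aux_tmc_lower {V : Type*} [Fintype V] (G : SimpleGraph V)
    (CE : Finset (Sym2 V)) (CV : Finset V)
    (hCE : ∀ e ∈ CE, e ∈ G.edgeSet) (hCV : CV.Nonempty)
    (hpath : ∀ u v : V, u ≠ v → ¬G.Adj u v →
      ∃ w : G.Walk u v, w.IsPath ∧ (∀ e ∈ w.edges, e ∈ CE) ∧
        ∀ x ∈ w.support.tail.dropLast, x ∈ CV) :
    G.edgeSet.ncard + Fintype.card V + 1 ≤ tmc G + CE.card + CV.card := by
  classical
  set κ : Sym2 V → ℕ := fun e => (Fintype.equivFin (Sym2 V) e : ℕ) with hκdef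
  set ι : V → ℕ := fun v => (Fintype.equivFin V v : ℕ) with hιdef
  have hκ : Function.Injective κ := fun a b hab =>
    (Fintype.equivFin (Sym2 V)).injective (Fin.val_injective hab)
  have hι : Function.Injective ι := fun a b hab =>
    (Fintype.equivFin V).injective (Fin.val_injective hab)
  set ce : Sym2 V → ℕ := fun e => if e ∈ CE then 0 else 3 * κ e + 1 with hcedef
  set cv : V → ℕ := fun v => if v ∈ CV then 0 else 3 * ι v + 2 with hcvdef
  have hTMC : IsTMCColoring G ce cv := by
    intro u v huv
    by_cases hadj : G.Adj u v
    · refine ⟨Walk.cons hadj Walk.nil, by simp [Walk.isPath_def, huv], ce s(u, v), ?_, by simp⟩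
      simp
    · obtain ⟨w, hw, he, hv⟩ := hpath u v huv hadj
      exact ⟨w, hw, 0, fun e hee => if_pos (he e hee), fun x hx => if_pos (hv x hx)⟩
  -- bound tmc from below by colorsUsed
  have hbdd : BddAbove {k | ∃ ce cv, IsTMCColoring G ce cv ∧ colorsUsed G ce cv = k} := by
    refine ⟨Fintype.card (Sym2 V) + Fintype.card V, ?_⟩
    rintro k ⟨ce', cv', -, rfl⟩
    unfold colorsUsed
    calc (ce' '' G.edgeSet ∪ Set.range cv').ncard
        ≤ (ce' '' G.edgeSet).ncard + (Set.range cv').ncard := Set.ncard_union_le _ _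
      _ ≤ Fintype.card (Sym2 V) + Fintype.card V := by
          gcongr
          · calc (ce' '' G.edgeSet).ncard ≤ G.edgeSet.ncard := Set.ncard_image_le G.edgeSet.toFinite
              _ ≤ (Set.univ : Set (Sym2 V)).ncard := Set.ncard_le_ncard (Set.subset_univ _)
              _ = Fintype.card (Sym2 V) := by rw [Set.ncard_univ, Nat.card_eq_fintype_card]
          · calc (Set.range cv').ncard = (cv' '' Set.univ).ncard := by rw [Set.image_univ]
              _ ≤ (Set.univ : Set V).ncard := Set.ncard_image_le Set.finite_univ
              _ = Fintype.card V := by rw [Set.ncard_univ, Nat.card_eq_fintype_card]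
  have htmc : colorsUsed G ce cv ≤ tmc G := le_csSup hbdd ⟨ce, cv, hTMC, rfl⟩
  -- count the colors used
  set T : Finset ℕ := insert 0 (((G.edgeFinset \ CE).image fun e => 3 * κ e + 1) ∪
      ((Finset.univ \ CV).image fun v => 3 * ι v + 2)) with hTdef
  have hsub : ↑T ⊆ ce '' G.edgeSet ∪ Set.range cv := by
    intro k hk
    simp only [hTdef, Finset.coe_insert, Set.mem_insert_iff, Finset.coe_union, Set.mem_union,
      Finset.coe_image, Set.mem_image, Finset.mem_coe, Finset.mem_sdiff, mem_edgeFinset,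
      Finset.mem_univ, true_and] at hk
    rcases hk with rfl | ⟨e, ⟨he1, he2⟩, rfl⟩ | ⟨v, hv1, rfl⟩
    · right
      obtain ⟨w, hw⟩ := hCV
      exact ⟨w, by simp [hcvdef, hw]⟩
    · left
      exact ⟨e, he1, by simp [hcedef, he2]⟩
    · right
      exact ⟨v, by simp [hcvdef, hv1]⟩
  have hTcard : T.card = 1 + (G.edgeFinset.card - CE.card) + (Fintype.card V - CV.card) := by
    rw [hTdef, Finset.card_insert_of_notMem, Finset.card_union_of_disjoint]
    · rw [Finset.card_image_of_injective _ (fun a b hab => hκ (by omega)),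
        Finset.card_image_of_injective _ (fun a b hab => hι (by omega)),
        Finset.card_sdiff_of_subset (by intro e he; exact mem_edgeFinset.mpr (hCE e he)),
        Finset.card_sdiff_of_subset (Finset.subset_univ _), Finset.card_univ]
      omega
    · rw [Finset.disjoint_left]
      rintro a ha hb
      simp only [Finset.mem_image] at ha hb
      obtain ⟨e, -, he⟩ := ha
      obtain ⟨v, -, hv⟩ := hb
      omega
    · intro h
      simp only [Finset.mem_union, Finset.mem_image] at h
      rcases h with ⟨x, -, hx⟩ | ⟨x, -, hx⟩ <;> omega
  have hfin : (ce '' G.edgeSet ∪ Set.range cv).Finite :=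
    (G.edgeSet.toFinite.image ce).union (Set.finite_range cv)
  have hcount : T.card ≤ colorsUsed G ce cv := by
    rw [← Set.ncard_coe_finset T]
    exact Set.ncard_le_ncard hsub hfin
  have hCEle : CE.card ≤ G.edgeFinset.card :=
    Finset.card_le_card (by intro e he; exact mem_edgeFinset.mpr (hCE e he))
  have hCVle : CV.card ≤ Fintype.card V := by
    rw [← Finset.card_univ]
    exact Finset.card_le_univ CV
  have hncard : G.edgeSet.ncard = G.edgeFinset.card := by
    rw [← Set.ncard_coe_finset, coe_edgeFinset]
  omega

lemma aux_sub_one_le_choose_two (n : ℕ) : n - 1 ≤ n.choose 2 := by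
  cases n with
  | zero => simp
  | succ m => rw [Nat.choose_succ_succ, Nat.choose_one_right]; omega


theorem stmt13 {V : Type*} [Fintype V] (n p : ℕ) (hp : p + 3 ≤ n)
    (G : SimpleGraph V) (hG : G.Connected) (hn : Fintype.card V = n)
    (hm : G.edgeSet.ncard = n.choose 2 - p) :
    (2 * p ≤ n → (n.choose 2 : ℤ) + (n : ℤ) - 3 * (p : ℤ) ≤ (tmc G : ℤ)) ∧
    (n < 2 * p → (n.choose 2 : ℤ) - (p : ℤ) ≤ (tmc G : ℤ)) := by
  classical
  subst hn
  set n := Fintype.card V with hndef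
  set q := n.choose 2 with hqdef
  have hq : p + 2 ≤ q := by
    have := aux_sub_one_le_choose_two n
    omega
  have hncard : ∀ (H : SimpleGraph V) (_ : DecidableRel H.Adj),
      H.edgeSet.ncard = H.edgeFinset.card := by
    intro H _
    rw [← Set.ncard_coe_finset, coe_edgeFinset]
  have hsum : G.edgeSet.ncard + Gᶜ.edgeSet.ncard = q := by
    have hdisj : Disjoint G.edgeSet Gᶜ.edgeSet :=
      (disjoint_edgeSet).mpr disjoint_compl_right
    have hunion : G.edgeSet ∪ Gᶜ.edgeSet = (⊤ : SimpleGraph V).edgeSet := by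
      rw [← edgeSet_sup, sup_compl_eq_top]
    have htop : ((⊤ : SimpleGraph V).edgeSet).ncard = q := by
      rw [hncard ⊤ inferInstance, card_edgeFinset_top_eq_card_choose_two]
    rw [← Set.ncard_union_eq hdisj (G.edgeSet.toFinite) (Gᶜ.edgeSet.toFinite), hunion, htop]
  have hpH : Gᶜ.edgeSet.ncard = p := by omega
  have hpH' : Gᶜ.edgeFinset.card = p := by rw [← hncard Gᶜ inferInstance]; exact hpH
  have hdegsum : ∑ v, Gᶜ.degree v = 2 * p := by
    rw [sum_degrees_eq_twice_card_edges, hpH']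
  by_cases hiso : ∃ w, ∀ x, ¬ Gᶜ.Adj w x
  · -- Case I : there is a vertex adjacent to all others
    obtain ⟨w, hw⟩ := hiso
    set A : Finset V := Finset.univ.filter (fun v => ∃ x, Gᶜ.Adj v x) with hAdef
    have hmemA : ∀ v, v ∈ A ↔ ∃ x, Gᶜ.Adj v x := by
      intro v; simp [hAdef]
    have hwA : w ∉ A := by
      rw [hmemA]; rintro ⟨x, hx⟩; exact hw x hx
    have hAcard : A.card ≤ 2 * p := by
      calc A.card = ∑ _v ∈ A, 1 := by simp
        _ ≤ ∑ v ∈ A, Gᶜ.degree v := by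
            refine Finset.sum_le_sum (fun v hv => ?_)
            rw [hmemA] at hv
            obtain ⟨x, hx⟩ := hv
            exact (Gᶜ.degree_pos_iff_exists_adj v).mpr ⟨x, hx⟩
        _ ≤ ∑ v, Gᶜ.degree v := Finset.sum_le_sum_of_subset (Finset.subset_univ _)
        _ = 2 * p := hdegsum
    have hAn : A.card + 1 ≤ n := by
      have hsub : A ⊆ Finset.univ.erase w := by
        intro a ha
        exact Finset.mem_erase.mpr ⟨fun h => hwA (h ▸ ha), Finset.mem_univ a⟩
      have := Finset.card_le_card hsub
      rw [Finset.card_erase_of_mem (Finset.mem_univ w), Finset.card_univ] at this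
      have hnpos : 0 < n := Fintype.card_pos_iff.mpr ⟨w⟩
      omega
    have hGadj : ∀ x, x ≠ w → G.Adj w x := by
      intro x hx
      have h1 := hw x
      rw [compl_adj] at h1
      push_neg at h1
      exact h1 (Ne.symm hx)
    set CE : Finset (Sym2 V) := A.image (fun a => s(a, w)) with hCEdef
    have hne_w : ∀ a ∈ A, a ≠ w := fun a ha h => hwA (h ▸ ha)
    have hCE : ∀ e ∈ CE, e ∈ G.edgeSet := by
      intro e he
      rw [hCEdef, Finset.mem_image] at he
      obtain ⟨a, ha, rfl⟩ := he
      rw [mem_edgeSet]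
      exact (hGadj a (hne_w a ha)).symm
    have hCEcard : CE.card ≤ 2 * p := le_trans (Finset.card_image_le) hAcard
    have hCEcard' : CE.card ≤ A.card := Finset.card_image_le
    have hpath : ∀ u v : V, u ≠ v → ¬G.Adj u v →
        ∃ wk : G.Walk u v, wk.IsPath ∧ (∀ e ∈ wk.edges, e ∈ CE) ∧
          ∀ x ∈ wk.support.tail.dropLast, x ∈ ({w} : Finset V) := by
      intro u v huv hnadj
      have hHuv : Gᶜ.Adj u v := by
        rw [compl_adj]; exact ⟨huv, hnadj⟩
      have huA : u ∈ A := (hmemA u).mpr ⟨v, hHuv⟩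
      have hvA : v ∈ A := (hmemA v).mpr ⟨u, hHuv.symm⟩
      have huw : u ≠ w := hne_w u huA
      have hvw : v ≠ w := hne_w v hvA
      refine ⟨Walk.cons ((hGadj u huw).symm) (Walk.cons (hGadj v hvw) Walk.nil),
        ?_, ?_, ?_⟩
      · simp [Walk.isPath_def, huv, huw, hvw, huw.symm, hvw.symm]
      · intro e he
        simp only [Walk.edges_cons, Walk.edges_nil, List.mem_cons, List.not_mem_nil,
          or_false] at he
        rcases he with rfl | rfl
        · exact Finset.mem_image.mpr ⟨u, huA, rfl⟩
        · exact Finset.mem_image.mpr ⟨v, hvA, Sym2.eq_swap⟩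
      · intro x hx
        simp only [Walk.support_cons, Walk.support_nil, List.tail_cons, List.dropLast,
          List.mem_cons, List.not_mem_nil, or_false] at hx
        simp [hx]
    have hmaster := aux_tmc_lower G CE ({w} : Finset V) hCE
      ⟨w, Finset.mem_singleton_self w⟩ hpath
    rw [Finset.card_singleton] at hmaster
    constructor <;> intro hcase <;> omega
  · -- Case II : every vertex is incident to a missing edge
    push_neg at hiso
    have hn2p : n ≤ 2 * p := by
      calc n = ∑ _v : V, 1 := by simp [hndef]
        _ ≤ ∑ v, Gᶜ.degree v := by
            refine Finset.sum_le_sum (fun v _ => ?_)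
            obtain ⟨x, hx⟩ := hiso v
            exact (Gᶜ.degree_pos_iff_exists_adj v).mpr ⟨x, hx⟩
        _ = 2 * p := hdegsum
    have hn3 : 3 ≤ n := by omega
    have hnV : Nonempty V := Fintype.card_pos_iff.mp (by omega)
    have hcent : ∃ w1 w2 : V, w1 ≠ w2 ∧ ¬Gᶜ.Adj w1 w2 ∧
        ∀ x, ¬(Gᶜ.Adj w1 x ∧ Gᶜ.Adj x w2) := by
      by_contra hno
      push_neg at hno
      have hconn : Gᶜ.Connected := by
        rw [connected_iff]
        refine ⟨fun u v => ?_, hnV⟩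
        by_cases huv : u = v
        · exact huv ▸ Reachable.refl u
        · by_cases hadj : Gᶜ.Adj u v
          · exact hadj.reachable
          · obtain ⟨x, h1, h2⟩ := hno u v huv hadj
            exact h1.reachable.trans h2.reachable
      have := aux_conn_card_le Gᶜ hconn
      rw [hpH'] at this
      omega
    obtain ⟨w1, w2, hne12, hnadj12, hcom⟩ := hcent
    have hGadj12 : G.Adj w1 w2 := by
      by_contra hc
      exact hnadj12 ((compl_adj G w1 w2).mpr ⟨hne12, hc⟩)
    set f : V → V := fun a => if Gᶜ.Adj a w1 then w2 else w1 with hfdef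
    have hfval : ∀ a, f a = if Gᶜ.Adj a w1 then w2 else w1 := fun _ => rfl
    have hf_mem : ∀ a, f a = w1 ∨ f a = w2 := by
      intro a
      by_cases hh : Gᶜ.Adj a w1
      · exact Or.inr (by rw [hfval a, if_pos hh])
      · exact Or.inl (by rw [hfval a, if_neg hh])
    have hfadj : ∀ a, a ≠ w1 → a ≠ w2 → G.Adj a (f a) := by
      intro a h1 h2
      by_cases hh : Gᶜ.Adj a w1
      · rw [hfval a, if_pos hh]
        by_contra hc
        exact (hcom a) ⟨hh.symm, (compl_adj G a w2).mpr ⟨h2, hc⟩⟩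
      · rw [hfval a, if_neg hh]
        by_contra hc
        exact hh ((compl_adj G a w1).mpr ⟨h1, hc⟩)
    set CE : Finset (Sym2 V) := insert s(w1, w2)
        ((Finset.univ \ {w1, w2}).image fun a => s(a, f a)) with hCEdef
    set CV : Finset V := {w1, w2} with hCVdef
    have hfCE : ∀ a, a ≠ w1 → a ≠ w2 → s(a, f a) ∈ CE := by
      intro a h1 h2
      exact Finset.mem_insert_of_mem (Finset.mem_image.mpr
        ⟨a, by simp [h1, h2], rfl⟩)
    have hfCV : ∀ a, f a ∈ CV := by
      intro a
      rcases hf_mem a with h | h <;> simp [hCVdef, h]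
    have hnc : ∀ a, a ≠ w1 → a ≠ w2 → ∀ b, a ≠ f b := by
      intro a h1 h2 b
      rcases hf_mem b with h | h <;> rw [h] <;> assumption
    have hCE : ∀ e ∈ CE, e ∈ G.edgeSet := by
      intro e he
      rw [hCEdef, Finset.mem_insert] at he
      rcases he with rfl | he
      · exact hGadj12
      · rw [Finset.mem_image] at he
        obtain ⟨a, ha, rfl⟩ := he
        obtain ⟨-, ha2⟩ := Finset.mem_sdiff.mp ha
        have h1 : a ≠ w1 := fun h => ha2 (by subst h; simp [hCVdef])
        have h2 : a ≠ w2 := fun h => ha2 (by subst h; simp [hCVdef])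
        exact hfadj a h1 h2
    have hCEcard : CE.card ≤ 1 + (n - 2) := by
      refine le_trans (Finset.card_insert_le _ _) ?_
      have h1 : ((Finset.univ \ {w1, w2}).image fun a => s(a, f a)).card ≤ n - 2 := by
        refine le_trans Finset.card_image_le ?_
        rw [Finset.card_sdiff_of_subset (Finset.subset_univ _), Finset.card_univ]
        have : ({w1, w2} : Finset V).card = 2 := Finset.card_pair hne12
        omega
      omega
    have hCVcard : CV.card ≤ 2 := by
      refine le_trans (Finset.card_insert_le _ _) ?_
      simp
    have hpath : ∀ u v : V, u ≠ v → ¬G.Adj u v →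
        ∃ wk : G.Walk u v, wk.IsPath ∧ (∀ e ∈ wk.edges, e ∈ CE) ∧
          ∀ x ∈ wk.support.tail.dropLast, x ∈ CV := by
      intro u v huv hnadj
      have hHuv : Gᶜ.Adj u v := by rw [compl_adj]; exact ⟨huv, hnadj⟩
      by_cases hu1 : u = w1
      · -- u = w1 : path u - w2 - v
        have hadjHvw1 : Gᶜ.Adj v w1 := by rw [← hu1]; exact hHuv.symm
        have hv1 : v ≠ w1 := hadjHvw1.ne
        have hv2 : v ≠ w2 := by
          intro h
          exact hnadj12 (by rw [← hu1, ← h]; exact hHuv)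
        have hfv : f v = w2 := by rw [hfval v, if_pos hadjHvw1]
        have hadj2v : G.Adj w2 v := by
          have h := hfadj v hv1 hv2
          rw [hfv] at h
          exact h.symm
        have hadjuw2 : G.Adj u w2 := by rw [hu1]; exact hGadj12
        have huw2 : u ≠ w2 := by rw [hu1]; exact hne12
        refine ⟨Walk.cons hadjuw2 (Walk.cons hadj2v Walk.nil), ?_, ?_, ?_⟩
        · simp [Walk.isPath_def, huv, huw2, hv2, Ne.symm hv2, Ne.symm huw2]
        · intro e he
          simp only [Walk.edges_cons, Walk.edges_nil, List.mem_cons, List.not_mem_nil,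
            or_false] at he
          rcases he with rfl | rfl
          · rw [hu1]
            exact Finset.mem_insert_self _ _
          · rw [Sym2.eq_swap, ← hfv]
            exact hfCE v hv1 hv2
        · intro x hx
          simp only [Walk.support_cons, Walk.support_nil, List.tail_cons, List.dropLast,
            List.mem_cons, List.not_mem_nil, or_false] at hx
          simp [hCVdef, hx]
      · by_cases hv1 : v = w1
        · -- v = w1 : path u - w2 - v
          have hadjHuw1 : Gᶜ.Adj u w1 := by rw [← hv1]; exact hHuv
          have hu2 : u ≠ w2 := by
            intro h
            exact hnadj12 (by rw [← hv1, ← h]; exact hHuv.symm)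
          have hfu : f u = w2 := by rw [hfval u, if_pos hadjHuw1]
          have hadjuw2 : G.Adj u w2 := by
            have h := hfadj u hu1 hu2
            rwa [hfu] at h
          have hadjw2v : G.Adj w2 v := by rw [hv1]; exact hGadj12.symm
          have hv2 : v ≠ w2 := by rw [hv1]; exact hne12
          refine ⟨Walk.cons hadjuw2 (Walk.cons hadjw2v Walk.nil), ?_, ?_, ?_⟩
          · simp [Walk.isPath_def, huv, hu2, hv2, Ne.symm hv2, Ne.symm hu2]
          · intro e he
            simp only [Walk.edges_cons, Walk.edges_nil, List.mem_cons, List.not_mem_nil,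
              or_false] at he
            rcases he with rfl | rfl
            · rw [← hfu]
              exact hfCE u hu1 hu2
            · rw [hv1, Sym2.eq_swap]
              exact Finset.mem_insert_self _ _
          · intro x hx
            simp only [Walk.support_cons, Walk.support_nil, List.tail_cons, List.dropLast,
              List.mem_cons, List.not_mem_nil, or_false] at hx
            simp [hCVdef, hx]
        · by_cases hu2 : u = w2
          · -- u = w2 : path u - w1 - v
            have hadjHvw2 : Gᶜ.Adj v w2 := by rw [← hu2]; exact hHuv.symm
            have hnv1 : ¬ Gᶜ.Adj v w1 := fun hc => hcom v ⟨hc.symm, hadjHvw2⟩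
            have hfv : f v = w1 := by rw [hfval v, if_neg hnv1]
            have hv2 : v ≠ w2 := by rw [← hu2]; exact Ne.symm huv
            have hadj1v : G.Adj w1 v := by
              have h := hfadj v hv1 hv2
              rw [hfv] at h
              exact h.symm
            have hadjuw1 : G.Adj u w1 := by rw [hu2]; exact hGadj12.symm
            refine ⟨Walk.cons hadjuw1 (Walk.cons hadj1v Walk.nil), ?_, ?_, ?_⟩
            · simp [Walk.isPath_def, huv, hu1, hv1, Ne.symm hv1, Ne.symm (show u ≠ w1 from hu1)]
            · intro e he
              simp only [Walk.edges_cons, Walk.edges_nil, List.mem_cons, List.not_mem_nil,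
                or_false] at he
              rcases he with rfl | rfl
              · rw [hu2, Sym2.eq_swap]
                exact Finset.mem_insert_self _ _
              · rw [Sym2.eq_swap, ← hfv]
                exact hfCE v hv1 hv2
            · intro x hx
              simp only [Walk.support_cons, Walk.support_nil, List.tail_cons, List.dropLast,
                List.mem_cons, List.not_mem_nil, or_false] at hx
              simp [hCVdef, hx]
          · by_cases hv2 : v = w2
            · -- v = w2 : path u - w1 - v
              have hadjHuw2 : Gᶜ.Adj u w2 := by rw [← hv2]; exact hHuv
              have hnu1 : ¬ Gᶜ.Adj u w1 := fun hc => hcom u ⟨hc.symm, hadjHuw2⟩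
              have hfu : f u = w1 := by rw [hfval u, if_neg hnu1]
              have hadju1 : G.Adj u w1 := by
                have h := hfadj u hu1 hu2
                rwa [hfu] at h
              have hadjw1v : G.Adj w1 v := by rw [hv2]; exact hGadj12
              refine ⟨Walk.cons hadju1 (Walk.cons hadjw1v Walk.nil), ?_, ?_, ?_⟩
              · simp [Walk.isPath_def, huv, hu1, hv1, Ne.symm hv1, Ne.symm (show u ≠ w1 from hu1)]
              · intro e he
                simp only [Walk.edges_cons, Walk.edges_nil, List.mem_cons, List.not_mem_nil,
                  or_false] at he
                rcases he with rfl | rfl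
                · rw [← hfu]
                  exact hfCE u hu1 hu2
                · rw [hv2]
                  exact Finset.mem_insert_self _ _
              · intro x hx
                simp only [Walk.support_cons, Walk.support_nil, List.tail_cons, List.dropLast,
                  List.mem_cons, List.not_mem_nil, or_false] at hx
                simp [hCVdef, hx]
            · -- generic case : u, v ∉ {w1, w2}
              have hadjuf : G.Adj u (f u) := hfadj u hu1 hu2
              have hadjvf : G.Adj v (f v) := hfadj v hv1 hv2
              have hufu : u ≠ f u := hnc u hu1 hu2 u
              have hufv : u ≠ f v := hnc u hu1 hu2 v
              have hvfu : v ≠ f u := hnc v hv1 hv2 u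
              have hvfv : v ≠ f v := hnc v hv1 hv2 v
              by_cases hff : f u = f v
              · -- path u - f u - v
                have hadjfv : G.Adj (f u) v := by rw [hff]; exact hadjvf.symm
                refine ⟨Walk.cons hadjuf (Walk.cons hadjfv Walk.nil), ?_, ?_, ?_⟩
                · simp [Walk.isPath_def, hufu, huv, hvfu, Ne.symm hufu, Ne.symm hvfu]
                · intro e he
                  simp only [Walk.edges_cons, Walk.edges_nil, List.mem_cons, List.not_mem_nil,
                    or_false] at he
                  rcases he with rfl | rfl
                  · exact hfCE u hu1 hu2
                  · rw [hff, Sym2.eq_swap]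
                    exact hfCE v hv1 hv2
                · intro x hx
                  simp only [Walk.support_cons, Walk.support_nil, List.tail_cons, List.dropLast,
                    List.mem_cons, List.not_mem_nil, or_false] at hx
                  rw [hx]
                  exact hfCV u
              · -- path u - f u - f v - v
                have hadjff : G.Adj (f u) (f v) := by
                  rcases hf_mem u with h1 | h1 <;> rcases hf_mem v with h2 | h2
                  · exact absurd (h1.trans h2.symm) hff
                  · rw [h1, h2]; exact hGadj12
                  · rw [h1, h2]; exact hGadj12.symm
                  · exact absurd (h1.trans h2.symm) hff
                have hffCE : s(f u, f v) ∈ CE := by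
                  rcases hf_mem u with h1 | h1 <;> rcases hf_mem v with h2 | h2
                  · exact absurd (h1.trans h2.symm) hff
                  · rw [h1, h2]; exact Finset.mem_insert_self _ _
                  · rw [h1, h2, Sym2.eq_swap]; exact Finset.mem_insert_self _ _
                  · exact absurd (h1.trans h2.symm) hff
                refine ⟨Walk.cons hadjuf (Walk.cons hadjff (Walk.cons hadjvf.symm Walk.nil)),
                  ?_, ?_, ?_⟩
                · simp [Walk.isPath_def, hufu, hufv, huv, hff, hvfu, hvfv,
                    Ne.symm hufu, Ne.symm hufv, Ne.symm hvfu, Ne.symm hvfv]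
                · intro e he
                  simp only [Walk.edges_cons, Walk.edges_nil, List.mem_cons, List.not_mem_nil,
                    or_false] at he
                  rcases he with rfl | rfl | rfl
                  · exact hfCE u hu1 hu2
                  · exact hffCE
                  · rw [Sym2.eq_swap]
                    exact hfCE v hv1 hv2
                · intro x hx
                  simp only [Walk.support_cons, Walk.support_nil, List.tail_cons, List.dropLast,
                    List.mem_cons, List.not_mem_nil, or_false] at hx
                  rcases hx with rfl | rfl
                  · exact hfCV u
                  · exact hfCV v
    have hCVne : CV.Nonempty := ⟨w1, by simp [hCVdef]⟩
    have hmaster := aux_tmc_lower G CE CV hCE hCVne hpath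
    constructor <;> intro hcase <;> omega
end

section
/- Let G be a connected graph with n vertices and m edges. If C(n−t,2) + t(n−t) ≤ m ≤ C(n−t,2) + t(n−t) + (t−2) for some integer t with 2 ≤ t ≤ n − 1, then tmc(G) ≤ m + n − t. -/
open SimpleGraph

section Aux


lemma choose2_succ (n : ℕ) : (n+1).choose 2 = n.choose 2 + n := by
  rw [Nat.choose]; simp [Nat.choose_one_right]; omega

lemma choose2_add (a b : ℕ) : (a + b).choose 2 = a.choose 2 + a * b + b.choose 2 := by
  induction b with
  | zero => simp
  | succ b ih =>
    have h1 : a + (b+1) = (a+b) + 1 := by ring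
    rw [h1, choose2_succ, ih, choose2_succ]; ring

lemma choose2_superadd (a b : ℕ) : a.choose 2 + b.choose 2 ≤ (a + b).choose 2 := by
  rw [choose2_add]; omega

lemma choose2_sum_le {ι : Type*} (s : Finset ι) (f : ι → ℕ) :
    ∑ i ∈ s, (f i).choose 2 ≤ (∑ i ∈ s, f i).choose 2 := by
  classical
  induction s using Finset.induction with
  | empty => simp
  | insert _ _ hx ih =>
    rw [Finset.sum_insert hx, Finset.sum_insert hx]
    exact le_trans (by omega) (choose2_superadd _ _)

lemma sym2_count {V : Type*} [DecidableEq V] (s : Finset (Sym2 V)) (S : Finset V)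
    (h : ∀ e ∈ s, ¬ e.IsDiag ∧ ∀ x ∈ e, x ∈ S) : s.card ≤ S.card.choose 2 := by
  rw [← Sym2.card_image_offDiag]
  apply Finset.card_le_card
  intro e he
  obtain ⟨hd, hm⟩ := h e he
  induction e with
  | _ a b =>
    rw [Sym2.mk_isDiag_iff] at hd
    simp only [Finset.mem_image, Finset.mem_offDiag]
    exact ⟨(a, b), ⟨hm a (by simp), hm b (by simp), hd⟩, rfl⟩

lemma comp_edge_bound {V : Type*} [Fintype V] [DecidableEq V] (H : SimpleGraph V)
    (K : H.ConnectedComponent)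
    (S : Finset V) (hS : ∀ v, v ∈ S ↔ v ∈ K.supp)
    (T : Finset (Sym2 V)) (hT : ∀ e, e ∈ H.edgeSet → (∀ x ∈ e, x ∈ K.supp) → e ∈ T) :
    S.card ≤ T.card + 1 := by
  classical
  set root := K.out with hroot
  have hrootS : root ∈ S := (hS root).2 ((SimpleGraph.ConnectedComponent.mem_supp_iff _ _).2 K.out_eq)
  have key : ∀ v : V, ∃ x : V, v ∈ S.erase root →
      (H.Adj v x ∧ H.dist x root + 1 = H.dist v root) := by
    intro v
    by_cases hv : v ∈ S.erase root
    · have hvne : v ≠ root := (Finset.mem_erase.1 hv).1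
      have hvK : H.connectedComponentMk v = K := ((hS v).1 (Finset.mem_erase.1 hv).2)
      have hr : H.Reachable v root :=
        SimpleGraph.ConnectedComponent.exact (by rw [hvK]; exact (K.out_eq).symm)
      have hd0 : H.dist v root ≠ 0 := fun h => hvne (hr.dist_eq_zero_iff.1 h)
      obtain ⟨p, hp⟩ := hr.exists_walk_length_eq_dist
      cases p with
      | nil => exact absurd rfl hvne
      | @cons _ x _ h q =>
        refine ⟨x, fun _ => ⟨h, ?_⟩⟩
        have h1 : H.dist x root ≤ q.length := SimpleGraph.dist_le q
        obtain ⟨r, hr2⟩ := q.reachable.exists_walk_length_eq_dist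
        have h2 : H.dist v root ≤ r.length + 1 := by
          simpa using SimpleGraph.dist_le (SimpleGraph.Walk.cons h r)
        simp only [SimpleGraph.Walk.length_cons] at hp
        omega
    · exact ⟨v, fun h => absurd h hv⟩
  choose g hg using key
  have hcard : (S.erase root).card ≤ T.card := by
    apply Finset.card_le_card_of_injOn (fun v => s(v, g v))
    · intro v hv
      obtain ⟨hadj, _⟩ := hg v hv
      have hvK : H.connectedComponentMk v = K := (hS v).1 (Finset.mem_erase.1 hv).2
      have hgvK : H.connectedComponentMk (g v) = K := by
        rw [← hvK]; exact SimpleGraph.ConnectedComponent.sound hadj.symm.reachable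
      apply hT _ hadj
      intro x hx
      rw [Sym2.mem_iff] at hx
      rcases hx with rfl | rfl
      · exact hvK
      · exact hgvK
    · intro v hv w hw hvw
      simp only [Sym2.eq_iff] at hvw
      rcases hvw with ⟨rfl, _⟩ | ⟨h1, h2⟩
      · rfl
      · obtain ⟨_, e1⟩ := hg _ (Finset.mem_coe.1 hv)
        obtain ⟨_, e2⟩ := hg _ (Finset.mem_coe.1 hw)
        rw [h2] at e1
        rw [← h1] at e2
        omega
  have := Finset.card_erase_of_mem hrootS
  omega

lemma walk_internal_ne {V : Type*} {H : SimpleGraph V} {u v : V} (w : H.Walk u v)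
    (hp : w.IsPath) {x : V} (hx : x ∈ w.support.tail.dropLast) : x ≠ u ∧ x ≠ v := by
  have hnd := hp.support_nodup
  have hcons := w.support_eq_cons
  constructor
  · intro h; subst h
    rw [hcons] at hnd
    exact (List.nodup_cons.1 hnd).1 (List.dropLast_subset _ hx)
  · intro h; subst h
    have htne : w.support.tail ≠ [] := by
      intro h; rw [h] at hx; simp at hx
    have hlast : w.support.tail.getLast htne = x := by
      rw [List.getLast_tail]; exact w.getLast_support
    have hsplit := List.dropLast_append_getLast htne
    rw [hlast] at hsplit
    have hndt : w.support.tail.Nodup := by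
      rw [hcons] at hnd; exact (List.nodup_cons.1 hnd).2
    rw [← hsplit] at hndt
    have := (List.nodup_append.1 hndt).2.2
    exact this x hx x (by simp) rfl

end Aux

theorem stmt14 {V : Type*} [Fintype V] (G : SimpleGraph V) (hG : G.Connected)
    (n m t : ℕ) (hn : Fintype.card V = n) (hm : G.edgeSet.ncard = m)
    (ht2 : 2 ≤ t) (htn : t ≤ n - 1)
    (hm1 : (n - t).choose 2 + t * (n - t) ≤ m)
    (hm2 : m ≤ (n - t).choose 2 + t * (n - t) + (t - 2)) :
    tmc G ≤ m + n - t := by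
  classical
  have main : ∀ ce cv, IsTMCColoring G ce cv → colorsUsed G ce cv ≤ m + n - t := by
    intro ce cv hTMC
    -- the edge finset
    set E : Finset (Sym2 V) := (G.edgeSet.toFinite).toFinset with hEdef
    have hmemE : ∀ e, e ∈ E ↔ e ∈ G.edgeSet := fun e => Set.Finite.mem_toFinset _
    have hE : E.card = m := by
      rw [← hm, Set.ncard_eq_toFinset_card _ G.edgeSet.toFinite]
    -- color subgraphs
    set Gc : ℕ → SimpleGraph V := fun c =>
      { Adj := fun a b => G.Adj a b ∧ ce s(a, b) = c
        symm := by
          refine ⟨fun a b h => ?_⟩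
          exact ⟨h.1.symm, by rw [Sym2.eq_swap]; exact h.2⟩
        loopless := ⟨fun a h => G.loopless.irrefl a h.1⟩ } with hGcdef
    have hGcEdge : ∀ c (e : Sym2 V), e ∈ (Gc c).edgeSet ↔ e ∈ G.edgeSet ∧ ce e = c := by
      intro c e
      induction e with
      | _ a b => exact Iff.rfl
    -- nonadjacent pairs
    set NA : Finset (Sym2 V) := ((Finset.univ : Finset V).offDiag.image Sym2.mk.uncurry) \ E with hNAdef
    have hNAmem : ∀ s ∈ NA, ¬ s.IsDiag ∧ s ∉ G.edgeSet := by
      intro s hs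
      rw [hNAdef, Finset.mem_sdiff] at hs
      obtain ⟨h1, h2⟩ := hs
      constructor
      · obtain ⟨⟨a, b⟩, hab, rfl⟩ := Finset.mem_image.1 h1
        rw [Function.uncurry_apply_pair, Sym2.mk_isDiag_iff]
        exact (Finset.mem_offDiag.1 hab).2.2
      · intro h; exact h2 ((hmemE s).2 h)
    have hNAcard : E.card + NA.card = n.choose 2 := by
      have hsub : E ⊆ (Finset.univ : Finset V).offDiag.image Sym2.mk.uncurry := by
        intro e he
        have hE' : e ∈ G.edgeSet := (hmemE e).1 he
        have hd := G.not_isDiag_of_mem_edgeSet hE'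
        induction e with
        | _ a b =>
          rw [Sym2.mk_isDiag_iff] at hd
          exact Finset.mem_image.2 ⟨(a, b), Finset.mem_offDiag.2 ⟨Finset.mem_univ _, Finset.mem_univ _, hd⟩, rfl⟩
      have h1 : NA.card = ((Finset.univ : Finset V).offDiag.image Sym2.mk.uncurry).card - E.card := by
        rw [hNAdef, Finset.card_sdiff_of_subset hsub]
      have h2 : ((Finset.univ : Finset V).offDiag.image Sym2.mk.uncurry).card = n.choose 2 := by
        rw [Sym2.card_image_offDiag, Finset.card_univ, hn]
      have h3 := Finset.card_le_card hsub
      omega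
    -- choose a total monochromatic path for each nonadjacent pair
    have pair_data : ∀ s : Sym2 V, ∃ c : ℕ, s ∈ NA →
        ∃ w : (Gc c).Walk (Quot.out s).1 (Quot.out s).2,
          w.IsPath ∧ (∀ e ∈ w.edges, ce e = c) ∧
          (∀ x ∈ w.support.tail.dropLast, cv x = c) ∧
          w.support.tail.dropLast ≠ [] ∧ w.edges ≠ [] := by
      intro s
      by_cases hs : s ∈ NA
      · obtain ⟨hnd, hne⟩ := hNAmem s hs
        have hsuv : s((Quot.out s).1, (Quot.out s).2) = s := by
          show Quot.mk _ ((Quot.out s).1, (Quot.out s).2) = s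
          rw [Prod.mk.eta]
          exact Quot.out_eq s
        set u := (Quot.out s).1
        set v := (Quot.out s).2
        have huv : u ≠ v := by
          intro h
          apply hnd
          rw [← hsuv, h]
          exact Sym2.mk_isDiag_iff.2 rfl
        have hnadj : ¬ G.Adj u v := by
          intro h
          apply hne
          rw [← hsuv]
          exact (SimpleGraph.mem_edgeSet G).2 h
        obtain ⟨w, hpath, c, hce', hcv'⟩ := hTMC u v huv
        have h0 : w.length ≠ 0 := fun h => huv (SimpleGraph.Walk.eq_of_length_eq_zero h)
        have h1 : w.length ≠ 1 := fun h => hnadj (SimpleGraph.Walk.adj_of_length_eq_one h)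
        have hedges : ∀ e ∈ w.edges, e ∈ (Gc c).edgeSet := fun e he =>
          (hGcEdge c e).2 ⟨w.edges_subset_edgeSet he, hce' e he⟩
        refine ⟨c, fun _ => ⟨w.transfer (Gc c) hedges, hpath.transfer _, ?_, ?_, ?_, ?_⟩⟩
        · rw [SimpleGraph.Walk.edges_transfer]; exact hce'
        · rw [SimpleGraph.Walk.support_transfer]; exact hcv'
        · rw [SimpleGraph.Walk.support_transfer]
          intro hnil
          have hlen := congrArg List.length hnil
          simp only [List.length_dropLast, List.length_tail,
            SimpleGraph.Walk.length_support, List.length_nil] at hlen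
          omega
        · rw [SimpleGraph.Walk.edges_transfer]
          intro hnil
          have hlen := congrArg List.length hnil
          simp only [SimpleGraph.Walk.length_edges, List.length_nil] at hlen
          omega
      · exact ⟨0, fun h => absurd h hs⟩
    choose χ hχ using pair_data
    -- color classes and blobs
    set Ec : ℕ → Finset (Sym2 V) := fun c => E.filter (fun e => ce e = c) with hEcdef
    set Vc : ℕ → Finset V := fun c => Finset.univ.filter (fun x => cv x = c) with hVcdef
    set Cs : Finset ℕ := NA.image χ with hCsdef
    set W : ℕ := ∑ c ∈ Cs, ((Ec c).card + (Vc c).card - 1) with hWdef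
    set β : Sym2 V → ℕ × Set V := fun s =>
      (χ s, (((Gc (χ s)).connectedComponentMk (Quot.out s).1).supp)) with hβdef
    set B : Finset (ℕ × Set V) := NA.image β with hBdef
    set EK : ℕ × Set V → Finset (Sym2 V) :=
      fun b => E.filter (fun e => ce e = b.1 ∧ ∀ x ∈ e, x ∈ b.2) with hEKdef
    set VK : ℕ × Set V → Finset V :=
      fun b => Finset.univ.filter (fun x => cv x = b.1 ∧ x ∈ b.2) with hVKdef
    have hVKmem : ∀ b x, x ∈ VK b ↔ (cv x = b.1 ∧ x ∈ b.2) := by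
      intro b x; rw [hVKdef]; simp
    have hEKmem : ∀ b e, e ∈ EK b ↔ (e ∈ G.edgeSet ∧ ce e = b.1 ∧ ∀ x ∈ e, x ∈ b.2) := by
      intro b e; rw [hEKdef]; simp [hmemE]
    have hEcmem : ∀ c e, e ∈ Ec c ↔ (e ∈ G.edgeSet ∧ ce e = c) := by
      intro c e; rw [hEcdef]; simp [hmemE]
    have hVcmem : ∀ c x, x ∈ Vc c ↔ cv x = c := by
      intro c x; rw [hVcdef]; simp
    -- per-pair facts
    have pairfacts : ∀ s ∈ NA,
        ((Quot.out s).1 ∈ (β s).2 ∧ (Quot.out s).2 ∈ (β s).2) ∧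
        (∃ x ∈ VK (β s), x ≠ (Quot.out s).1 ∧ x ≠ (Quot.out s).2) ∧
        (Ec (χ s)).Nonempty := by
      intro s hs
      set u := (Quot.out s).1 with hudef
      set v := (Quot.out s).2 with hvdef
      set K := (Gc (χ s)).connectedComponentMk u with hKdef
      obtain ⟨w, hpath, hce', hcv', hint, hedne⟩ := hχ s hs
      have hβs : β s = (χ s, K.supp) := rfl
      have hu : u ∈ K.supp := (SimpleGraph.ConnectedComponent.mem_supp_iff _ _).2 rfl
      have hv : v ∈ K.supp := by
        rw [SimpleGraph.ConnectedComponent.mem_supp_iff]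
        exact (SimpleGraph.ConnectedComponent.sound w.reachable).symm
      refine ⟨⟨hu, hv⟩, ?_, ?_⟩
      · obtain ⟨x, hx⟩ := List.exists_mem_of_ne_nil _ hint
        have hxsupp : x ∈ w.support := List.mem_of_mem_tail (List.dropLast_subset _ hx)
        have hxK : x ∈ K.supp := by
          rw [SimpleGraph.ConnectedComponent.mem_supp_iff]
          exact (SimpleGraph.ConnectedComponent.sound
            (SimpleGraph.Walk.reachable (w.takeUntil x hxsupp))).symm
        have hne := walk_internal_ne w hpath hx
        exact ⟨x, (hVKmem _ x).2 ⟨hcv' x hx, hxK⟩, hne.1, hne.2⟩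
      · obtain ⟨e, he⟩ := List.exists_mem_of_ne_nil _ hedne
        have heG := (hGcEdge (χ s) e).1 (w.edges_subset_edgeSet he)
        exact ⟨e, (hEcmem _ e).2 heG⟩
    have hβ1 : ∀ s, (β s).1 = χ s := fun s => rfl
    -- Step 1: color counting
    have hcolors : colorsUsed G ce cv = ((E.image ce) ∪ (Finset.univ.image cv)).card := by
      rw [colorsUsed]
      have h1 : ce '' G.edgeSet = ↑(E.image ce) := by
        rw [Finset.coe_image, Set.Finite.coe_toFinset]
      have h2 : Set.range cv = ↑(Finset.univ.image cv) := by
        rw [Finset.coe_image, Finset.coe_univ, Set.image_univ]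
      rw [h1, h2, ← Finset.coe_union, Set.ncard_coe_finset]
    have hCsE : Cs ⊆ E.image ce := by
      intro c hc
      obtain ⟨s, hs, rfl⟩ := Finset.mem_image.1 hc
      obtain ⟨e, he⟩ := (pairfacts s hs).2.2
      obtain ⟨heG, hec⟩ := (hEcmem _ e).1 he
      exact Finset.mem_image.2 ⟨e, (hmemE e).2 heG, hec⟩
    have hCsV : Cs ⊆ Finset.univ.image cv := by
      intro c hc
      obtain ⟨s, hs, rfl⟩ := Finset.mem_image.1 hc
      obtain ⟨x, hx, -, -⟩ := (pairfacts s hs).2.1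
      have := ((hVKmem _ x).1 hx).1
      rw [hβ1] at this
      exact Finset.mem_image.2 ⟨x, Finset.mem_univ _, this⟩
    have hsumE : ∑ d ∈ E.image ce, (Ec d).card = m := by
      rw [← hE]
      exact (Finset.card_eq_sum_card_fiberwise (fun e he => Finset.mem_image_of_mem ce he)).symm
    have hsumV : ∑ d ∈ Finset.univ.image cv, (Vc d).card = n := by
      rw [← hn, ← Finset.card_univ]
      exact (Finset.card_eq_sum_card_fiberwise
        (fun x _ => Finset.mem_image_of_mem cv (Finset.mem_univ x))).symm
    have hEcpos : ∀ d ∈ E.image ce, 1 ≤ (Ec d).card := by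
      intro d hd
      obtain ⟨e, he, rfl⟩ := Finset.mem_image.1 hd
      exact Finset.card_pos.2 ⟨e, (hEcmem _ e).2 ⟨(hmemE e).1 he, rfl⟩⟩
    have hVcpos : ∀ d ∈ Finset.univ.image cv, 1 ≤ (Vc d).card := by
      intro d hd
      obtain ⟨x, _, rfl⟩ := Finset.mem_image.1 hd
      exact Finset.card_pos.2 ⟨x, (hVcmem _ x).2 rfl⟩
    have h2 : (E.image ce).card + ∑ c ∈ Cs, (Ec c).card ≤ m + Cs.card := by
      have hsplit : ∑ d ∈ (E.image ce) \ Cs, (Ec d).card + ∑ c ∈ Cs, (Ec c).card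
          = ∑ d ∈ E.image ce, (Ec d).card := Finset.sum_sdiff hCsE
      have hlow : ((E.image ce) \ Cs).card ≤ ∑ d ∈ (E.image ce) \ Cs, (Ec d).card := by
        rw [Finset.card_eq_sum_ones]
        exact Finset.sum_le_sum (fun d hd => hEcpos d (Finset.mem_sdiff.1 hd).1)
      have hcards := Finset.card_sdiff_add_card_eq_card hCsE
      omega
    have h3 : (Finset.univ.image cv).card + ∑ c ∈ Cs, (Vc c).card ≤ n + Cs.card := by
      have hsplit : ∑ d ∈ (Finset.univ.image cv) \ Cs, (Vc d).card + ∑ c ∈ Cs, (Vc c).card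
          = ∑ d ∈ Finset.univ.image cv, (Vc d).card := Finset.sum_sdiff hCsV
      have hlow : ((Finset.univ.image cv) \ Cs).card ≤ ∑ d ∈ (Finset.univ.image cv) \ Cs, (Vc d).card := by
        rw [Finset.card_eq_sum_ones]
        exact Finset.sum_le_sum (fun d hd => hVcpos d (Finset.mem_sdiff.1 hd).1)
      have hcards := Finset.card_sdiff_add_card_eq_card hCsV
      omega
    have hEcCs : ∀ c ∈ Cs, 1 ≤ (Ec c).card := by
      intro c hc
      obtain ⟨s, hs, rfl⟩ := Finset.mem_image.1 hc
      exact Finset.card_pos.2 (pairfacts s hs).2.2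
    have h4 : W + Cs.card = ∑ c ∈ Cs, ((Ec c).card + (Vc c).card) := by
      rw [hWdef, Finset.card_eq_sum_ones Cs, ← Finset.sum_add_distrib]
      apply Finset.sum_congr rfl
      intro c hc
      have := hEcCs c hc
      omega
    have h1 : ((E.image ce) ∪ (Finset.univ.image cv)).card + Cs.card ≤
        (E.image ce).card + (Finset.univ.image cv).card := by
      have hu := Finset.card_union_add_card_inter (E.image ce) (Finset.univ.image cv)
      have hsub : Cs ⊆ (E.image ce) ∩ (Finset.univ.image cv) :=
        fun c hc => Finset.mem_inter.2 ⟨hCsE hc, hCsV hc⟩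
      have := Finset.card_le_card hsub
      omega
    have hstep1 : colorsUsed G ce cv + W ≤ m + n := by
      rw [hcolors]
      have hsplitsum : ∑ c ∈ Cs, ((Ec c).card + (Vc c).card) =
          ∑ c ∈ Cs, (Ec c).card + ∑ c ∈ Cs, (Vc c).card := Finset.sum_add_distrib
      omega
    -- Step 2: W ≥ t via blob counting
    have hVKne : ∀ b ∈ B, (VK b).Nonempty := by
      intro b hb
      obtain ⟨s, hs, rfl⟩ := Finset.mem_image.1 hb
      obtain ⟨x, hx, -, -⟩ := (pairfacts s hs).2.1
      exact ⟨x, hx⟩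
    have hfib : NA.card = ∑ b ∈ B, (NA.filter (fun s => β s = b)).card :=
      Finset.card_eq_sum_card_fiberwise (fun s hs => Finset.mem_image_of_mem β hs)
    have hfb : ∀ b ∈ B, (NA.filter (fun s => β s = b)).card ≤
        ((EK b).card + (VK b).card - 1).choose 2 := by
      intro b hb
      obtain ⟨s₀, hs₀, rfl⟩ := Finset.mem_image.1 hb
      have hVK1 : 1 ≤ (VK (β s₀)).card :=
        Finset.card_pos.2 (hVKne _ (Finset.mem_image_of_mem β hs₀))
      set c := χ s₀ with hcdef
      set K := (Gc c).connectedComponentMk (Quot.out s₀).1 with hKdef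
      have hβs₀ : β s₀ = (c, K.supp) := rfl
      set P : Finset V := Finset.univ.filter (fun x => x ∈ K.supp) with hPdef
      have hPmem : ∀ x, x ∈ P ↔ x ∈ K.supp := by intro x; rw [hPdef]; simp
      have hPE : P.card ≤ (EK (β s₀)).card + 1 := by
        apply comp_edge_bound (Gc c) K P hPmem
        intro e heG hend
        have h := (hGcEdge c e).1 heG
        refine (hEKmem _ e).2 ⟨h.1, ?_, ?_⟩
        · rw [hβs₀]; exact h.2
        · rw [hβs₀]; exact hend
      have hfacts : ∀ s ∈ NA.filter (fun s => β s = β s₀), ¬ s.IsDiag ∧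
          (Quot.out s).1 ∈ P ∧ (Quot.out s).2 ∈ P ∧
          ∃ x ∈ VK (β s₀), x ≠ (Quot.out s).1 ∧ x ≠ (Quot.out s).2 := by
        intro s hsf
        obtain ⟨hsNA, hβeq⟩ := Finset.mem_filter.1 hsf
        obtain ⟨⟨hu, hv⟩, hint, -⟩ := pairfacts s hsNA
        rw [hβeq] at hu hv hint
        refine ⟨(hNAmem s hsNA).1, ?_, ?_, hint⟩
        · exact (hPmem _).2 (by rw [hβs₀] at hu; exact hu)
        · exact (hPmem _).2 (by rw [hβs₀] at hv; exact hv)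
      rcases Nat.lt_or_ge (VK (β s₀)).card 2 with hv2 | hv2
      · have h1 : (VK (β s₀)).card = 1 := by omega
        obtain ⟨x, hx⟩ := Finset.card_eq_one.1 h1
        have hxP : x ∈ P := by
          have hxm : x ∈ VK (β s₀) := by rw [hx]; exact Finset.mem_singleton_self x
          have h2 := ((hVKmem _ x).1 hxm).2
          exact (hPmem x).2 (by rw [hβs₀] at h2; exact h2)
        have hbound : (NA.filter (fun s => β s = β s₀)).card ≤ ((P.erase x).card).choose 2 := by
          apply sym2_count
          intro s hsf
          obtain ⟨hnd, hu, hv, y, hy, hyu, hyv⟩ := hfacts s hsf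
          have hyx : y = x := by rw [hx] at hy; exact Finset.mem_singleton.1 hy
          subst hyx
          refine ⟨hnd, ?_⟩
          intro z hz
          have houteq : s((Quot.out s).1, (Quot.out s).2) = s := by
            show Quot.mk _ ((Quot.out s).1, (Quot.out s).2) = s
            rw [Prod.mk.eta]; exact Quot.out_eq s
          rw [← houteq, Sym2.mem_iff] at hz
          rcases hz with rfl | rfl
          · exact Finset.mem_erase.2 ⟨Ne.symm hyu, hu⟩
          · exact Finset.mem_erase.2 ⟨Ne.symm hyv, hv⟩
        have hcard : (P.erase x).card = P.card - 1 := Finset.card_erase_of_mem hxP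
        have hle : (P.erase x).card ≤ (EK (β s₀)).card + (VK (β s₀)).card - 1 := by omega
        exact le_trans hbound (Nat.choose_le_choose _ hle)
      · have hbound : (NA.filter (fun s => β s = β s₀)).card ≤ (P.card).choose 2 := by
          apply sym2_count
          intro s hsf
          obtain ⟨hnd, hu, hv, -⟩ := hfacts s hsf
          refine ⟨hnd, ?_⟩
          intro z hz
          have houteq : s((Quot.out s).1, (Quot.out s).2) = s := by
            show Quot.mk _ ((Quot.out s).1, (Quot.out s).2) = s
            rw [Prod.mk.eta]; exact Quot.out_eq s
          rw [← houteq, Sym2.mem_iff] at hz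
          rcases hz with rfl | rfl
          · exact hu
          · exact hv
        have hle : P.card ≤ (EK (β s₀)).card + (VK (β s₀)).card - 1 := by omega
        exact le_trans hbound (Nat.choose_le_choose _ hle)
    have hBfst : ∀ b ∈ B, b.1 ∈ Cs := by
      intro b hb
      obtain ⟨s, hs, rfl⟩ := Finset.mem_image.1 hb
      exact Finset.mem_image_of_mem χ hs
    have hBW : ∑ b ∈ B, ((EK b).card + (VK b).card - 1) ≤ W := by
      rw [hWdef, ← Finset.sum_fiberwise_of_maps_to hBfst (fun b => (EK b).card + (VK b).card - 1)]
      apply Finset.sum_le_sum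
      intro c hc
      set Bc := B.filter (fun b => b.1 = c) with hBcdef
      have hsupp : ∀ b ∈ Bc, ∀ b' ∈ Bc, b ≠ b' → ∀ x : V, x ∈ b.2 → x ∈ b'.2 → False := by
        intro b hb b' hb' hne x hxb hxb'
        obtain ⟨hbB, hbc⟩ := Finset.mem_filter.1 hb
        obtain ⟨hb'B, hb'c⟩ := Finset.mem_filter.1 hb'
        obtain ⟨s, hs, rfl⟩ := Finset.mem_image.1 hbB
        obtain ⟨s', hs', rfl⟩ := Finset.mem_image.1 hb'B
        have hb2 : ∀ (σ : Sym2 V), x ∈ (β σ).2 →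
            (β σ).2 = ((Gc (χ σ)).connectedComponentMk x).supp := by
          intro σ hσ
          have h := (SimpleGraph.ConnectedComponent.mem_supp_iff
            ((Gc (χ σ)).connectedComponentMk (Quot.out σ).1) x).1 hσ
          show ((Gc (χ σ)).connectedComponentMk (Quot.out σ).1).supp = _
          rw [h]
        have hcs : χ s = c := hbc
        have hcs' : χ s' = c := hb'c
        refine hne (Prod.ext ?_ ?_)
        · rw [hβ1, hβ1, hcs, hcs']
        · rw [hb2 s hxb, hb2 s' hxb', hcs, hcs']
      have hdisjE : ∀ b ∈ Bc, ∀ b' ∈ Bc, b ≠ b' → Disjoint (EK b) (EK b') := by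
        intro b hb b' hb' hne
        rw [Finset.disjoint_left]
        intro e heb heb'
        have h1 := (hEKmem b e).1 heb
        have h2 := (hEKmem b' e).1 heb'
        exact hsupp b hb b' hb' hne e.out.1 (h1.2.2 _ (Sym2.out_fst_mem e))
          (h2.2.2 _ (Sym2.out_fst_mem e))
      have hdisjV : ∀ b ∈ Bc, ∀ b' ∈ Bc, b ≠ b' → Disjoint (VK b) (VK b') := by
        intro b hb b' hb' hne
        rw [Finset.disjoint_left]
        intro x hxb hxb'
        exact hsupp b hb b' hb' hne x ((hVKmem b x).1 hxb).2 ((hVKmem b' x).1 hxb').2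
      have hEsum : ∑ b ∈ Bc, (EK b).card ≤ (Ec c).card := by
        rw [← Finset.card_biUnion hdisjE]
        apply Finset.card_le_card
        intro e he
        obtain ⟨b, hb, heb⟩ := Finset.mem_biUnion.1 he
        have h1 := (hEKmem b e).1 heb
        exact (hEcmem c e).2 ⟨h1.1, by rw [← (Finset.mem_filter.1 hb).2]; exact h1.2.1⟩
      have hVsum : ∑ b ∈ Bc, (VK b).card ≤ (Vc c).card := by
        rw [← Finset.card_biUnion hdisjV]
        apply Finset.card_le_card
        intro x hxm
        obtain ⟨b, hb, hxb⟩ := Finset.mem_biUnion.1 hxm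
        have h1 := (hVKmem b x).1 hxb
        exact (hVcmem c x).2 (by rw [← (Finset.mem_filter.1 hb).2]; exact h1.1)
      have hBcne : Bc.Nonempty := by
        obtain ⟨s, hs, hsc⟩ := Finset.mem_image.1 hc
        refine ⟨β s, Finset.mem_filter.2 ⟨Finset.mem_image_of_mem β hs, ?_⟩⟩
        rw [hβ1]; exact hsc
      have hone : ∀ b ∈ Bc, 1 ≤ (VK b).card :=
        fun b hb => Finset.card_pos.2 (hVKne b (Finset.mem_filter.1 hb).1)
      have hsum1 : ∑ b ∈ Bc, ((EK b).card + (VK b).card - 1) + Bc.card =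
          ∑ b ∈ Bc, ((EK b).card + (VK b).card) := by
        rw [Finset.card_eq_sum_ones Bc, ← Finset.sum_add_distrib]
        apply Finset.sum_congr rfl
        intro b hb
        have := hone b hb
        omega
      have hsplit2 : ∑ b ∈ Bc, ((EK b).card + (VK b).card) =
          ∑ b ∈ Bc, (EK b).card + ∑ b ∈ Bc, (VK b).card := Finset.sum_add_distrib
      have hBcpos : 1 ≤ Bc.card := Finset.card_pos.2 hBcne
      have hEcCs' := hEcCs c hc
      omega
    have hNAW : NA.card ≤ W.choose 2 := by
      rw [hfib]
      calc ∑ b ∈ B, (NA.filter (fun s => β s = b)).card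
          ≤ ∑ b ∈ B, ((EK b).card + (VK b).card - 1).choose 2 := Finset.sum_le_sum hfb
        _ ≤ (∑ b ∈ B, ((EK b).card + (VK b).card - 1)).choose 2 := choose2_sum_le _ _
        _ ≤ W.choose 2 := Nat.choose_le_choose _ hBW
    have hnt : n - t + t = n := Nat.sub_add_cancel (le_trans htn (Nat.sub_le n 1))
    have hid : n.choose 2 = (n - t).choose 2 + (n - t) * t + t.choose 2 := by
      conv_lhs => rw [← hnt]
      exact choose2_add _ _
    have htW : t ≤ W := by
      by_contra hcon
      push_neg at hcon
      have hW1 : W.choose 2 ≤ (t-1).choose 2 := Nat.choose_le_choose _ (by omega)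
      have ht1 : (t-1) + 1 = t := by omega
      have hch : t.choose 2 = (t-1).choose 2 + (t-1) := by
        conv_lhs => rw [← ht1]
        rw [choose2_succ]
      have hcomm : t * (n - t) = (n - t) * t := Nat.mul_comm _ _
      omega
    omega



  refine csSup_le' ?_
  rintro k ⟨ce, cv, h1, rfl⟩
  exact main ce cv h1
end

section
/- Let n and t be integers with 2 ≤ t ≤ n − 1, and let G* be an n-vertex graph obtained as follows: take the complete (n−t+1)-partite graph with n − t classes of size 1 and one class V of size t, and then add at most t − 2 additional edges inside V. If the resulting number of edges m satisfies C(n−t,2) + t(n−t) ≤ m ≤ C(n−t,2) + t(n−t) + (t−2), then tmc(G*) = m + n − t. -/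
open SimpleGraph

private lemma exists_parent {V : Type*} {H : SimpleGraph V} {w r : V}
    (h : H.Reachable w r) (hne : w ≠ r) :
    ∃ p, H.Adj w p ∧ H.dist p r < H.dist w r := by
  obtain ⟨q, hq⟩ := h.exists_walk_length_eq_dist
  cases q with
  | nil => exact absurd rfl hne
  | @cons _ b _ hadj q' =>
    refine ⟨b, hadj, ?_⟩
    have h1 := SimpleGraph.dist_le q'
    simp only [Walk.length_cons] at hq
    omega

private lemma ncard_le_edge {V : Type*} [Fintype V] {H : SimpleGraph V} {S : Set V} {r : V}
    (hr : r ∉ S) (hreach : ∀ w ∈ S, H.Reachable w r) :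
    S.ncard ≤ H.edgeSet.ncard := by
  classical
  have hpar : ∀ w ∈ S, ∃ p, H.Adj w p ∧ H.dist p r < H.dist w r := by
    intro w hw
    exact exists_parent (hreach w hw) (fun h => hr (h ▸ hw))
  choose! pa hadj hlt using hpar
  refine Set.ncard_le_ncard_of_injOn (fun w => s(w, pa w))
    (fun w hw => (H.mem_edgeSet).mpr (hadj w hw)) ?_ (Set.toFinite _)
  intro a ha b hb hab
  rcases Sym2.eq_iff.mp hab with ⟨h1, _⟩ | ⟨h1, h2⟩
  · exact h1
  · exfalso
    have l1 := hlt a ha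
    have l2 := hlt b hb
    rw [h2] at l1
    rw [← h1] at l2
    exact absurd (l1.trans l2) (lt_irrefl _)

private lemma walk_stay {V : Type*} {G : SimpleGraph V} {A W : Set V}
    (hA : ∀ a b, a ∈ A → G.Adj a b → b ∈ W → b ∈ A) :
    ∀ {x y : V} (p : G.Walk x y), x ∈ A → (∀ v ∈ p.support, v ∈ W) → y ∈ A := by
  intro x y p
  induction p with
  | nil => exact fun hx _ => hx
  | cons h q ih =>
    intro hx hsup
    refine ih (hA _ _ hx h (hsup _ ?_)) (fun v hv => hsup v ?_)
    · rw [Walk.support_cons]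
      exact List.mem_cons_of_mem _ q.start_mem_support
    · rw [Walk.support_cons]
      exact List.mem_cons_of_mem _ hv

private lemma mem_dropLast_support {V : Type*} {G : SimpleGraph V} :
    ∀ {x y u : V} (p : G.Walk x y), u ∈ p.support → u ≠ y → u ∈ p.support.dropLast := by
  intro x y u p
  induction p with
  | nil =>
    intro h hne
    rw [Walk.support_nil, List.mem_singleton] at h
    exact absurd h hne
  | cons h q ih =>
    intro hu hne
    rw [Walk.support_cons] at hu ⊢
    rw [List.dropLast_cons_of_ne_nil q.support_ne_nil]
    rcases List.mem_cons.mp hu with rfl | hu'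
    · exact List.mem_cons_self
    · exact List.mem_cons_of_mem _ (ih hu' hne)

private lemma mem_internal {V : Type*} {G : SimpleGraph V} {x y u : V} (p : G.Walk x y)
    (hu : u ∈ p.support) (hx : u ≠ x) (hy : u ≠ y) : u ∈ p.support.tail.dropLast := by
  cases p with
  | nil =>
    rw [Walk.support_nil, List.mem_singleton] at hu
    exact absurd hu hx
  | cons h q =>
    rw [Walk.support_cons] at hu ⊢
    rw [List.tail_cons]
    rcases List.mem_cons.mp hu with rfl | hu'
    · exact absurd rfl hx
    · exact mem_dropLast_support q hu' hy

private lemma tmc_upper {V : Type*} [Fintype V] {t : ℕ} (ht2 : 2 ≤ t) {W : Set V}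
    (hW : W.ncard = t) {G : SimpleGraph V}
    (hin : {e ∈ G.edgeSet | ∀ v ∈ e, v ∈ W}.ncard ≤ t - 2)
    {ce : Sym2 V → ℕ} {cv : V → ℕ} (h : IsTMCColoring G ce cv) :
    colorsUsed G ce cv + t ≤ G.edgeSet.ncard + Fintype.card V := by
  classical
  have hWne : W.Nonempty := by
    rw [← Set.ncard_pos]
    omega
  obtain ⟨w0, hw0⟩ := hWne
  let GW : SimpleGraph V :=
    { Adj := fun a b => G.Adj a b ∧ a ∈ W ∧ b ∈ W
      symm := ⟨fun a b hab => ⟨hab.1.symm, hab.2.2, hab.2.1⟩⟩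
      loopless := ⟨fun a ha => G.loopless.irrefl a ha.1⟩ }
  let A : Set V := {x | x ∈ W ∧ GW.Reachable w0 x}
  have hw0A : w0 ∈ A := ⟨hw0, Reachable.refl w0⟩
  have hAW : A ⊆ W := fun x hx => hx.1
  have hclose : ∀ a b, a ∈ A → G.Adj a b → b ∈ W → b ∈ A := by
    intro a b ha hadj hbW
    have hGW : GW.Adj a b := ⟨hadj, ha.1, hbW⟩
    exact ⟨hbW, ha.2.trans hGW.reachable⟩
  have hexy : ∃ y0 ∈ W, y0 ∉ A := by
    by_contra hc
    push_neg at hc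
    have hreach : ∀ w ∈ W \ {w0}, GW.Reachable w w0 := fun w hw => ((hc w hw.1).2).symm
    have hcard := ncard_le_edge (by simp) hreach
    have hsub : GW.edgeSet ⊆ {e ∈ G.edgeSet | ∀ v ∈ e, v ∈ W} := by
      intro e
      induction e using Sym2.ind with
      | _ a b =>
        intro he
        have hab : GW.Adj a b := (GW.mem_edgeSet).mp he
        refine ⟨(G.mem_edgeSet).mpr hab.1, ?_⟩
        intro v hv
        rcases Sym2.mem_iff.mp hv with rfl | rfl
        · exact hab.2.1
        · exact hab.2.2
    have h1 : (W \ {w0}).ncard = t - 1 := by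
      rw [Set.ncard_diff_singleton_of_mem hw0, hW]
    have h2 : GW.edgeSet.ncard ≤ t - 2 :=
      le_trans (Set.ncard_le_ncard hsub (Set.toFinite _)) hin
    omega
  obtain ⟨y0, hy0W, hy0A⟩ := hexy
  let G' : SimpleGraph V :=
    { Adj := fun a b => G.Adj a b ∧ ce s(a, b) ∈ Set.range cv
      symm := ⟨fun a b hab => ⟨hab.1.symm, by rw [Sym2.eq_swap]; exact hab.2⟩⟩
      loopless := ⟨fun a ha => G.loopless.irrefl a ha.1⟩ }
  have hcross : ∀ x ∈ A, ∀ y ∈ W, y ∉ A →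
      G'.Reachable x y ∧ ∃ u, u ∉ W ∧ G'.Reachable x u := by
    intro x hx y hyW hyA
    have hne : x ≠ y := fun hxy => hyA (hxy ▸ hx)
    obtain ⟨p, hpath, c, hce, hcv⟩ := h x y hne
    have hesc : ∃ u ∈ p.support, u ∉ W := by
      by_contra hc
      push_neg at hc
      exact hyA (walk_stay hclose p hx hc)
    obtain ⟨u, huS, huW⟩ := hesc
    have hux : u ≠ x := fun hh => huW (hh ▸ hAW hx)
    have huy : u ≠ y := fun hh => huW (hh ▸ hyW)
    have hcvu : cv u = c := hcv u (mem_internal p huS hux huy)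
    have hQ : ∀ e ∈ p.edges, e ∈ G'.edgeSet := by
      intro e
      induction e using Sym2.ind with
      | _ a b =>
        intro he
        exact (G'.mem_edgeSet).mpr
          ⟨(G.mem_edgeSet).mp (p.edges_subset_edgeSet he), ⟨u, by rw [hcvu, hce _ he]⟩⟩
    let hwalk := p.transfer G' hQ
    have husup : u ∈ hwalk.support := by
      rw [Walk.support_transfer]
      exact huS
    exact ⟨⟨hwalk⟩, u, huW, ⟨hwalk.takeUntil u husup⟩⟩
  obtain ⟨hr0, u0, hu0W, hru0⟩ := hcross w0 hw0A y0 hy0W hy0A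
  have hallreach : ∀ w ∈ W, G'.Reachable w u0 := by
    intro w hwW
    by_cases hwA : w ∈ A
    · obtain ⟨hr1, -⟩ := hcross w hwA y0 hy0W hy0A
      exact (hr1.trans hr0.symm).trans hru0
    · obtain ⟨hr1, -⟩ := hcross w0 hw0A w hwW hwA
      exact hr1.symm.trans hru0
  have hQcard : t ≤ G'.edgeSet.ncard := by
    rw [← hW]
    exact ncard_le_edge hu0W hallreach
  let Q : Set (Sym2 V) := {e | e ∈ G.edgeSet ∧ ce e ∈ Set.range cv}
  have hG'Q : G'.edgeSet ⊆ Q := by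
    intro e
    induction e using Sym2.ind with
    | _ a b =>
      intro he
      have hab : G'.Adj a b := (G'.mem_edgeSet).mp he
      exact ⟨(G.mem_edgeSet).mpr hab.1, hab.2⟩
  have hQsub : Q ⊆ G.edgeSet := fun e he => he.1
  have hQt : t ≤ Q.ncard := le_trans hQcard (Set.ncard_le_ncard hG'Q (Set.toFinite _))
  have himg : ce '' G.edgeSet ∪ Set.range cv = ce '' (G.edgeSet \ Q) ∪ Set.range cv := by
    apply Set.Subset.antisymm
    · rintro x (⟨e, he, rfl⟩ | hx)
      · by_cases heQ : e ∈ Q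
        · exact Or.inr heQ.2
        · exact Or.inl ⟨e, ⟨he, heQ⟩, rfl⟩
      · exact Or.inr hx
    · rintro x (⟨e, he, rfl⟩ | hx)
      · exact Or.inl ⟨e, he.1, rfl⟩
      · exact Or.inr hx
  have hrange : (Set.range cv).ncard ≤ Fintype.card V := by
    rw [← Set.image_univ]
    calc (cv '' Set.univ).ncard ≤ (Set.univ : Set V).ncard :=
          Set.ncard_image_le (Set.toFinite _)
    _ = Fintype.card V := by rw [Set.ncard_univ, Nat.card_eq_fintype_card]
  have hcount : colorsUsed G ce cv ≤ (G.edgeSet.ncard - Q.ncard) + Fintype.card V := by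
    rw [colorsUsed, himg]
    refine le_trans (Set.ncard_union_le _ _) (Nat.add_le_add ?_ hrange)
    refine le_trans (Set.ncard_image_le (Set.toFinite _)) ?_
    rw [Set.ncard_diff hQsub]
  have hQm : Q.ncard ≤ G.edgeSet.ncard := Set.ncard_le_ncard hQsub (Set.toFinite _)
  omega

private lemma tmc_lower {V : Type*} [Fintype V] {t : ℕ} (ht2 : 2 ≤ t) {W : Set V}
    (hW : W.ncard = t) (htn : t < Fintype.card V) {G : SimpleGraph V}
    (hout : ∀ u v : V, u ≠ v → (u ∉ W ∨ v ∉ W) → G.Adj u v) :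
    ∃ ce cv, IsTMCColoring G ce cv ∧
      colorsUsed G ce cv = G.edgeSet.ncard + Fintype.card V - t := by
  classical
  obtain ⟨u, huW⟩ : ∃ u, u ∉ W := by
    by_contra hc
    push_neg at hc
    have : W = Set.univ := Set.eq_univ_of_forall hc
    rw [this, Set.ncard_univ, Nat.card_eq_fintype_card] at hW
    omega
  obtain ⟨fE, hfE⟩ : ∃ f : Sym2 V → ℕ, Function.Injective f :=
    Countable.exists_injective_nat (Sym2 V)
  obtain ⟨fV, hfV⟩ : ∃ f : V → ℕ, Function.Injective f :=
    Countable.exists_injective_nat V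
  set Eu : Set (Sym2 V) := (fun w => s(u, w)) '' W with hEu
  set cef : Sym2 V → ℕ := fun e => if e ∈ Eu then 0 else 2 * fE e + 2 with hcef
  set cvf : V → ℕ := fun v => if v = u then 0 else 2 * fV v + 1 with hcvf
  have hadjuw : ∀ w ∈ W, G.Adj u w := fun w hw =>
    hout u w (fun hh => huW (hh ▸ hw)) (Or.inl huW)
  have hEuE : Eu ⊆ G.edgeSet := by
    rintro e ⟨w, hw, rfl⟩
    exact (G.mem_edgeSet).mpr (hadjuw w hw)
  have hEucard : Eu.ncard = t := by
    rw [hEu, Set.ncard_image_of_injOn, hW]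
    intro a ha b hb hab
    rcases Sym2.eq_iff.mp hab with ⟨_, h2⟩ | ⟨h1, h2⟩
    · exact h2
    · exact absurd (h2 ▸ ha) huW
  have hmge : t ≤ G.edgeSet.ncard := by
    rw [← hEucard]
    exact Set.ncard_le_ncard hEuE (Set.toFinite _)
  have htmc : IsTMCColoring G cef cvf := by
    intro x y hxy
    by_cases hadj : G.Adj x y
    · refine ⟨Walk.cons hadj Walk.nil, ?_, cef s(x, y), ?_, ?_⟩
      · rw [Walk.isPath_def]
        simp [hxy]
      · intro e he
        simp only [Walk.edges_cons, Walk.edges_nil, List.mem_singleton] at he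
        rw [he]
      · intro z hz
        simp at hz
    · have hxW : x ∈ W := by
        by_contra hh
        exact hadj (hout x y hxy (Or.inl hh))
      have hyW : y ∈ W := by
        by_contra hh
        exact hadj (hout x y hxy (Or.inr hh))
      have hxu : x ≠ u := fun hh => huW (hh ▸ hxW)
      have hyu : y ≠ u := fun hh => huW (hh ▸ hyW)
      have h1 : G.Adj x u := (hadjuw x hxW).symm
      have h2 : G.Adj u y := hadjuw y hyW
      refine ⟨Walk.cons h1 (Walk.cons h2 Walk.nil), ?_, 0, ?_, ?_⟩
      · rw [Walk.isPath_def]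
        simp [hxu, hxy, Ne.symm hyu]
      · intro e he
        simp only [Walk.edges_cons, Walk.edges_nil, List.mem_cons,
          List.mem_singleton, List.not_mem_nil, or_false] at he
        rcases he with rfl | rfl
        · have hmem : s(x, u) ∈ Eu := ⟨x, hxW, Sym2.eq_swap⟩
          rw [hcef]
          exact if_pos hmem
        · have hmem : s(u, y) ∈ Eu := ⟨y, hyW, rfl⟩
          rw [hcef]
          exact if_pos hmem
      · intro z hz
        simp only [Walk.support_cons, Walk.support_nil, List.tail_cons,
          List.dropLast_cons₂, List.dropLast_singleton, List.mem_singleton] at hz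
        rw [hz, hcvf]
        exact if_pos rfl
  refine ⟨cef, cvf, htmc, ?_⟩
  have h0mem : (0 : ℕ) ∈ Set.range cvf := ⟨u, if_pos rfl⟩
  have himgeq : cef '' (G.edgeSet \ Eu) = (fun e => 2 * fE e + 2) '' (G.edgeSet \ Eu) :=
    Set.image_congr (fun e he => by rw [hcef]; exact if_neg he.2)
  have hU : cef '' G.edgeSet ∪ Set.range cvf
      = (fun e => 2 * fE e + 2) '' (G.edgeSet \ Eu) ∪ Set.range cvf := by
    rw [← himgeq]
    apply Set.Subset.antisymm
    · rintro x (⟨e, he, rfl⟩ | hx)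
      · by_cases heEu : e ∈ Eu
        · refine Or.inr ?_
          rw [show cef e = 0 from if_pos heEu]
          exact h0mem
        · exact Or.inl ⟨e, ⟨he, heEu⟩, rfl⟩
      · exact Or.inr hx
    · rintro x (⟨e, he, rfl⟩ | hx)
      · exact Or.inl ⟨e, he.1, rfl⟩
      · exact Or.inr hx
  have hdisj : Disjoint ((fun e => 2 * fE e + 2) '' (G.edgeSet \ Eu)) (Set.range cvf) := by
    rw [Set.disjoint_left]
    rintro x ⟨e, _, rfl⟩ ⟨v, hv⟩
    have hv' : (if v = u then 0 else 2 * fV v + 1) = 2 * fE e + 2 := hv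
    by_cases hvu : v = u
    · rw [if_pos hvu] at hv'
      omega
    · rw [if_neg hvu] at hv'
      omega
  have hc1 : ((fun e => 2 * fE e + 2) '' (G.edgeSet \ Eu)).ncard = G.edgeSet.ncard - t := by
    rw [Set.ncard_image_of_injective _ (fun a b hab => hfE (by omega)),
      Set.ncard_diff hEuE, hEucard]
  have hcvinj : Function.Injective cvf := by
    intro a b hab
    have hab' : (if a = u then 0 else 2 * fV a + 1) = (if b = u then 0 else 2 * fV b + 1) := hab
    by_cases ha : a = u <;> by_cases hb : b = u
    · rw [ha, hb]
    · rw [if_pos ha, if_neg hb] at hab'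
      exfalso
      omega
    · rw [if_neg ha, if_pos hb] at hab'
      exfalso
      omega
    · rw [if_neg ha, if_neg hb] at hab'
      exact hfV (by omega)
  have hc2 : (Set.range cvf).ncard = Fintype.card V := by
    rw [← Set.image_univ, Set.ncard_image_of_injective _ hcvinj, Set.ncard_univ,
      Nat.card_eq_fintype_card]
  rw [colorsUsed, hU, Set.ncard_union_eq hdisj, hc1, hc2]
  omega

theorem stmt15 {V : Type*} [Fintype V] (n t : ℕ) (ht2 : 2 ≤ t) (htn : t ≤ n - 1)
    (hn : Fintype.card V = n) (W : Set V) (hW : W.ncard = t)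
    (G : SimpleGraph V)
    (hout : ∀ u v : V, u ≠ v → (u ∉ W ∨ v ∉ W) → G.Adj u v)
    (hin : {e ∈ G.edgeSet | ∀ v ∈ e, v ∈ W}.ncard ≤ t - 2)
    (hm1 : (n - t).choose 2 + t * (n - t) ≤ G.edgeSet.ncard)
    (hm2 : G.edgeSet.ncard ≤ (n - t).choose 2 + t * (n - t) + (t - 2)) :
    tmc G = G.edgeSet.ncard + n - t := by
  classical
  have htln : t < Fintype.card V := by omega
  obtain ⟨ce, cv, htmc, hcount⟩ := tmc_lower ht2 hW htln hout
  have hub : ∀ k ∈ {k | ∃ ce cv, IsTMCColoring G ce cv ∧ colorsUsed G ce cv = k},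
      k ≤ G.edgeSet.ncard + Fintype.card V - t := by
    rintro k ⟨ce', cv', h1, rfl⟩
    have := tmc_upper ht2 hW hin h1
    omega
  have hmem : G.edgeSet.ncard + Fintype.card V - t
      ∈ {k | ∃ ce cv, IsTMCColoring G ce cv ∧ colorsUsed G ce cv = k} :=
    ⟨ce, cv, htmc, hcount⟩
  have hfinal : tmc G = G.edgeSet.ncard + Fintype.card V - t := by
    rw [tmc]
    apply le_antisymm
    · exact csSup_le ⟨_, hmem⟩ hub
    · exact le_csSup ⟨_, hub⟩ hmem
  rw [hfinal, hn]
end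

section
/- Let n and k be positive integers with C(n,2) − n + 4 ≤ k ≤ C(n,2) + n − 3⌊n/2⌋, excluding the case where n is odd and k = C(n,2) + n − 3⌊n/2⌋. Then f(n,k) = k; that is, every connected graph on n vertices with at least k edges has tmc at least k, and there exists a connected graph on n vertices with k − 1 edges whose tmc is less than k. -/
open SimpleGraph

open Finset

-- extraction: from a TMC coloring and a non-neighbor, get second-vertex data
lemma extract {V : Type*} {G : SimpleGraph V} {ce : Sym2 V → ℕ} {cv : V → ℕ}
    (h : IsTMCColoring G ce cv) {v u : V} (hne : v ≠ u) (hnadj : ¬ G.Adj v u) :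
    ∃ x : V, G.Adj v x ∧ cv x = ce s(v, x) := by
  obtain ⟨w, hp, c, hce, hcv⟩ := h v u hne
  cases w with
  | nil => exact absurd rfl hne
  | cons hvx w' =>
    rename_i x
    cases w' with
    | nil => exact absurd hvx hnadj
    | cons hxy w'' =>
      rename_i y
      refine ⟨x, hvx, ?_⟩
      have he : ce s(v, x) = c := by
        apply hce
        simp [SimpleGraph.Walk.edges_cons]
      have hv : cv x = c := by
        apply hcv
        simp only [SimpleGraph.Walk.support_cons, List.tail_cons]
        rw [List.dropLast_cons_of_ne_nil (SimpleGraph.Walk.support_ne_nil _)]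
        exact List.mem_cons_self
      rw [hv, he]

-- colorsUsed as a Finset card
lemma colorsUsed_eq {V : Type*} [Fintype V] [DecidableEq V] (G : SimpleGraph V)
    [DecidableRel G.Adj] (ce : Sym2 V → ℕ) (cv : V → ℕ) :
    colorsUsed G ce cv = (G.edgeFinset.image ce ∪ Finset.univ.image cv).card := by
  classical
  rw [colorsUsed, ← Set.ncard_coe_finset]
  congr 1
  rw [Finset.coe_union, Finset.coe_image, Finset.coe_image, SimpleGraph.coe_edgeFinset,
    Finset.coe_univ, Set.image_univ]

lemma core {V : Type} [Fintype V] [DecidableEq V] (G : SimpleGraph V) [DecidableRel G.Adj]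
    (ce : Sym2 V → ℕ) (cv : V → ℕ) (x : V → V)
    (hadj : ∀ v, G.Adj v (x v)) (hcvx : ∀ v, cv (x v) = ce s(v, x v)) :
    (G.edgeFinset.image ce ∪ Finset.univ.image cv).card ≤ G.edgeFinset.card := by
  classical
  set EF := G.edgeFinset with hEF
  set EC := EF.image ce with hEC
  set d : V → ℕ := fun v => ce s(v, x v) with hd
  have hmemEF : ∀ v, s(v, x v) ∈ EF := by
    intro v; simpa [hEF, SimpleGraph.mem_edgeFinset] using (hadj v)
  have hdEC : ∀ v, d v ∈ EC := fun v => Finset.mem_image_of_mem ce (hmemEF v)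
  -- key per-color inequality
  have key : ∀ dc ∈ EC,
      (univ.filter (fun v => d v = dc)).card + 1
        ≤ (EF.filter (fun e => ce e = dc)).card + (univ.filter (fun v => cv v = dc)).card := by
    intro dc hdc
    set A := univ.filter (fun v => d v = dc) with hA
    set M := EF.filter (fun e => ce e = dc) with hM
    set I := univ.filter (fun v => cv v = dc) with hI
    set A' := A.filter (fun v => ¬ cv v = dc) with hA'
    set A'' := A.filter (fun v => cv v = dc) with hA''
    have hsplit : A''.card + A'.card = A.card := by
      rw [hA', hA'']; exact Finset.card_filter_add_card_filter_not _
    have hxv : ∀ v ∈ A, cv (x v) = dc := by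
      intro v hv
      have : d v = dc := by simpa [hA] using hv
      rw [hcvx v]; exact this
    have hmemM : ∀ v ∈ A, s(v, x v) ∈ M := by
      intro v hv
      have : d v = dc := by simpa [hA] using hv
      exact Finset.mem_filter.2 ⟨hmemEF v, this⟩
    -- injectivity of v ↦ s(v, x v) on A'
    have hinj : Set.InjOn (fun v => s(v, x v)) A' := by
      intro v hv v' hv' heq
      by_contra hne
      have hv'cv : ¬ cv v' = dc := (Finset.mem_filter.1 hv').2
      have hvA : v ∈ A := Finset.mem_filter.1 hv |>.1
      have : v' = x v := by
        rcases Sym2.eq_iff.1 heq with ⟨h1, h2⟩ | ⟨h1, h2⟩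
        · exact absurd h1 hne
        · exact h2.symm
      exact hv'cv (this ▸ hxv v hvA)
    rcases Finset.eq_empty_or_nonempty A'' with hAe | ⟨x0, hx0⟩
    · -- A = A'
      rcases Finset.eq_empty_or_nonempty A with hAe2 | ⟨v0, hv0⟩
      · -- need 1 ≤ M.card + I.card
        have hM1 : M.Nonempty := by
          rcases Finset.mem_image.1 hdc with ⟨e, he, hee⟩
          exact ⟨e, Finset.mem_filter.2 ⟨he, hee⟩⟩
        have := Finset.card_pos.2 hM1
        have hA0 : A.card = 0 := by rw [hAe2]; simp
        omega
      · have hIne : (x v0) ∈ I := by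
          exact Finset.mem_filter.2 ⟨Finset.mem_univ _, hxv v0 hv0⟩
        have hI1 : 1 ≤ I.card := Finset.card_pos.2 ⟨_, hIne⟩
        have hcard : A'.card ≤ M.card := by
          apply Finset.card_le_card_of_injOn (fun v => s(v, x v)) _ hinj
          intro v hv; exact hmemM v (Finset.mem_filter.1 hv).1
        have hA0 : A''.card = 0 := by rw [hAe]; simp
        omega
    · -- A'' nonempty: x0 with cv x0 = dc, d x0 = dc
      have hx0A : x0 ∈ A := (Finset.mem_filter.1 hx0).1
      have hx0cv : cv x0 = dc := (Finset.mem_filter.1 hx0).2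
      set f := s(x0, x x0) with hf
      have hfM : f ∈ M := hmemM x0 hx0A
      have hcard : A'.card ≤ (M.erase f).card := by
        apply Finset.card_le_card_of_injOn (fun v => s(v, x v)) _ hinj
        intro v hv
        have hvA' : v ∈ A' := hv
        have hvA : v ∈ A := (Finset.mem_filter.1 hvA').1
        have hvcv : ¬ cv v = dc := (Finset.mem_filter.1 hvA').2
        refine Finset.mem_erase.2 ⟨?_, hmemM v hvA⟩
        intro heq
        rcases Sym2.eq_iff.1 (hf ▸ heq) with ⟨h1, _⟩ | ⟨h1, _⟩
        · exact hvcv (h1 ▸ hx0cv)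
        · exact hvcv (h1 ▸ hxv x0 hx0A)
      have hA''I : A'' ⊆ I := by
        intro v hv
        exact Finset.mem_filter.2 ⟨Finset.mem_univ _, (Finset.mem_filter.1 hv).2⟩
      have h1 : A''.card ≤ I.card := Finset.card_le_card hA''I
      have h2 : (M.erase f).card + 1 = M.card := by
        rw [Finset.card_erase_of_mem hfM]
        have := Finset.card_pos.2 ⟨f, hfM⟩
        omega
      omega
  -- sum up
  have hsum1 : Fintype.card V = ∑ dc ∈ EC, (univ.filter (fun v => d v = dc)).card := by
    simpa using Finset.card_eq_sum_card_fiberwise (s := (univ : Finset V)) (fun v _ => hdEC v)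
  have hsum2 : EF.card = ∑ dc ∈ EC, (EF.filter (fun e => ce e = dc)).card :=
    Finset.card_eq_sum_card_fiberwise (fun e he => Finset.mem_image_of_mem ce he)
  have hsum3 : (univ.filter (fun v => cv v ∈ EC)).card
      = ∑ dc ∈ EC, (univ.filter (fun v => cv v = dc)).card := by
    rw [Finset.card_eq_sum_card_fiberwise
      (f := cv) (s := univ.filter (fun v => cv v ∈ EC)) (t := EC) (fun v hv => (Finset.mem_filter.1 hv).2)]
    apply Finset.sum_congr rfl
    intro dc hdc
    congr 1
    ext v
    simp only [Finset.mem_filter, Finset.mem_univ, true_and]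
    constructor
    · rintro ⟨h1, h2⟩; exact h2
    · intro h; exact ⟨h ▸ hdc, h⟩
  have hle : ∑ dc ∈ EC, ((univ.filter (fun v => d v = dc)).card + 1)
      ≤ ∑ dc ∈ EC, ((EF.filter (fun e => ce e = dc)).card + (univ.filter (fun v => cv v = dc)).card) :=
    Finset.sum_le_sum key
  rw [Finset.sum_add_distrib, Finset.sum_add_distrib, Finset.sum_const, smul_eq_mul, mul_one] at hle
  -- |VC \ EC| ≤ n - t
  have hVC : (univ.image cv \ EC).card ≤ (univ.filter (fun v => ¬ cv v ∈ EC)).card := by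
    apply Finset.card_le_card_of_surjOn cv
    intro c hc
    rcases Finset.mem_sdiff.1 hc with ⟨hc1, hc2⟩
    rcases Finset.mem_image.1 hc1 with ⟨v, _, hv⟩
    exact ⟨v, by simp [hv ▸ hc2], hv⟩
  have hcardsplit : (univ.filter (fun v => cv v ∈ EC)).card
      + (univ.filter (fun v => ¬ cv v ∈ EC)).card = Fintype.card V := by
    simpa using Finset.card_filter_add_card_filter_not (s := (univ : Finset V)) (fun v => cv v ∈ EC)
  have hunion : (EC ∪ univ.image cv).card ≤ EC.card + (univ.image cv \ EC).card := by
    rw [← Finset.union_sdiff_self_eq_union]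
    exact Finset.card_union_le _ _
  omega
lemma tmc_le {V : Type} [Fintype V] (G : SimpleGraph V)
    (hcov : ∀ v : V, ∃ u, v ≠ u ∧ ¬ G.Adj v u) :
    tmc G ≤ G.edgeSet.ncard := by
  classical
  apply csSup_le'
  rintro b ⟨ce, cv, htmc, rfl⟩
  have hx : ∀ v : V, ∃ x : V, G.Adj v x ∧ cv x = ce s(v, x) := by
    intro v
    obtain ⟨u, hne, hnadj⟩ := hcov v
    exact extract htmc hne hnadj
  choose x hadj hcvx using hx
  rw [colorsUsed_eq]
  have h2 : G.edgeSet.ncard = G.edgeFinset.card := by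
    rw [← SimpleGraph.coe_edgeFinset, Set.ncard_coe_finset]
  rw [h2]
  exact core G ce cv x hadj hcvx
lemma mono_one {V : Type} {G : SimpleGraph V} (ce : Sym2 V → ℕ) (cv : V → ℕ)
    {a b : V} (hab : G.Adj a b) (hce : ce s(a, b) = 0) :
    ∃ w : G.Walk a b, w.IsPath ∧ IsTotalMonoWalk ce cv w := by
  refine ⟨Walk.cons hab Walk.nil, ?_, 0, ?_, ?_⟩
  · simp [hab.ne]
  · intro e he
    simp only [Walk.edges_cons, Walk.edges_nil, List.mem_singleton] at he
    rw [he]; exact hce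
  · intro x hx
    simp [Walk.support_cons, Walk.support_nil] at hx
lemma mono_two {V : Type} {G : SimpleGraph V} (ce : Sym2 V → ℕ) (cv : V → ℕ)
    {a m b : V} (ham : G.Adj a m) (hmb : G.Adj m b) (hab : a ≠ b)
    (h1 : ce s(a, m) = 0) (h2 : ce s(m, b) = 0) (h3 : cv m = 0) :
    ∃ w : G.Walk a b, w.IsPath ∧ IsTotalMonoWalk ce cv w := by
  refine ⟨Walk.cons ham (Walk.cons hmb Walk.nil), ?_, 0, ?_, ?_⟩
  · rw [Walk.isPath_def]
    simp [Walk.support_cons, Walk.support_nil, ham.ne, hmb.ne, hab]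
  · intro e he
    simp only [Walk.edges_cons, Walk.edges_nil, List.mem_cons, List.mem_singleton,
      List.not_mem_nil, or_false] at he
    rcases he with h | h <;> (rw [h]; assumption)
  · intro x hx
    simp only [Walk.support_cons, Walk.support_nil, List.tail_cons] at hx
    simp only [List.dropLast_cons₂, List.dropLast_singleton, List.mem_singleton] at hx
    rw [hx]; exact h3
lemma mono_three {V : Type} {G : SimpleGraph V} (ce : Sym2 V → ℕ) (cv : V → ℕ)
    {a m1 m2 b : V} (h1 : G.Adj a m1) (h2 : G.Adj m1 m2) (h3 : G.Adj m2 b)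
    (hab : a ≠ b) (ham2 : a ≠ m2) (hm1b : m1 ≠ b)
    (hc1 : ce s(a, m1) = 0) (hc2 : ce s(m1, m2) = 0) (hc3 : ce s(m2, b) = 0)
    (hv1 : cv m1 = 0) (hv2 : cv m2 = 0) :
    ∃ w : G.Walk a b, w.IsPath ∧ IsTotalMonoWalk ce cv w := by
  refine ⟨Walk.cons h1 (Walk.cons h2 (Walk.cons h3 Walk.nil)), ?_, 0, ?_, ?_⟩
  · rw [Walk.isPath_def]
    simp [Walk.support_cons, Walk.support_nil, h1.ne, h2.ne, h3.ne, hab, ham2, hm1b]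
  · intro e he
    simp only [Walk.edges_cons, Walk.edges_nil, List.mem_cons, List.mem_singleton,
      List.not_mem_nil, or_false] at he
    rcases he with h | h | h <;> (rw [h]; assumption)
  · intro x hx
    simp only [Walk.support_cons, Walk.support_nil, List.tail_cons] at hx
    simp only [List.dropLast_cons₂, List.dropLast_singleton, List.mem_cons,
      List.mem_singleton, List.not_mem_nil, or_false] at hx
    rcases hx with h | h <;> (rw [h]; assumption)
-- appended after defs & mono lemmas & colorsUsed_eq
lemma tmc_bddAbove {V : Type} [Fintype V] (G : SimpleGraph V) :
    BddAbove {k | ∃ ce cv, IsTMCColoring G ce cv ∧ colorsUsed G ce cv = k} := by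
  classical
  refine ⟨G.edgeFinset.card + Fintype.card V, ?_⟩
  rintro j ⟨ce, cv, _, rfl⟩
  rw [colorsUsed_eq]
  calc (G.edgeFinset.image ce ∪ univ.image cv).card
      ≤ (G.edgeFinset.image ce).card + (univ.image cv).card := Finset.card_union_le _ _
    _ ≤ G.edgeFinset.card + Fintype.card V := by
        gcongr
        · exact Finset.card_image_le
        · simpa using (Finset.card_image_le (s := (univ : Finset V)) (f := cv))

lemma doubleStar {V : Type} [Fintype V] (G : SimpleGraph V) (u w : V) (huw : G.Adj u w)
    (pa : V → V) (hpa : ∀ y, y ≠ u → y ≠ w → (pa y = u ∨ pa y = w) ∧ G.Adj (pa y) y) :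
    G.edgeSet.ncard ≤ tmc G := by
  classical
  obtain ⟨encV, hencV⟩ := exists_injective_nat V
  obtain ⟨encE, hencE⟩ := exists_injective_nat (Sym2 V)
  set n := Fintype.card V with hn
  set EF := G.edgeFinset with hEF
  set m := EF.card with hm
  -- the double-star tree
  set g : V → Sym2 V := fun y => if y = w then s(u, w) else s(pa y, y) with hg
  set TF : Finset (Sym2 V) := (univ.erase u).image g with hTF
  have huwne : u ≠ w := huw.ne
  have hginj : Set.InjOn g (univ.erase u) := by
    intro y hy y' hy' heq
    have hyu : y ≠ u := by simpa using (Finset.mem_coe.1 hy)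
    have hy'u : y' ≠ u := by simpa using (Finset.mem_coe.1 hy')
    by_contra hne
    rw [hg] at heq
    simp only at heq
    by_cases hyw : y = w <;> by_cases hy'w : y' = w
    · exact hne (hyw.trans hy'w.symm)
    · rw [if_pos hyw, if_neg hy'w] at heq
      rcases Sym2.eq_iff.1 heq with ⟨h1, h2⟩ | ⟨h1, h2⟩
      · exact hy'w h2.symm
      · exact hy'u h1.symm
    · rw [if_neg hyw, if_pos hy'w] at heq
      rcases Sym2.eq_iff.1 heq with ⟨h1, h2⟩ | ⟨h1, h2⟩
      · exact hyw h2
      · exact hyu h2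
    · rw [if_neg hyw, if_neg hy'w] at heq
      rcases Sym2.eq_iff.1 heq with ⟨h1, h2⟩ | ⟨h1, h2⟩
      · exact hne h2
      · rcases (hpa y hyu hyw).1 with hp | hp
        · exact hy'u (h1.symm.trans hp)
        · exact hy'w (h1.symm.trans hp)
  have hTFcard : TF.card = n - 1 := by
    rw [hTF, Finset.card_image_of_injOn hginj, Finset.card_erase_of_mem (Finset.mem_univ u)]
    simp [hn]
  have hTFsub : TF ⊆ EF := by
    intro e he
    rw [hTF] at he
    rcases Finset.mem_image.1 he with ⟨y, hy, rfl⟩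
    have hyu : y ≠ u := by simpa using hy
    rw [hg]
    by_cases hyw : y = w
    · simp only [if_pos hyw]
      exact SimpleGraph.mem_edgeFinset.2 huw
    · simp only [if_neg hyw]
      exact SimpleGraph.mem_edgeFinset.2 (hpa y hyu hyw).2
  have huwTF : s(u, w) ∈ TF := by
    rw [hTF]
    refine Finset.mem_image.2 ⟨w, ?_, ?_⟩
    · exact Finset.mem_erase.2 ⟨huw.ne', Finset.mem_univ _⟩
    · rw [hg]; simp
  have hpaTF : ∀ y, y ≠ u → y ≠ w → s(pa y, y) ∈ TF := by
    intro y h1 h2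
    rw [hTF]
    refine Finset.mem_image.2 ⟨y, Finset.mem_erase.2 ⟨h1, Finset.mem_univ _⟩, ?_⟩
    rw [hg]; simp [h2]
  -- the coloring
  set cv : V → ℕ := fun y => if y = u ∨ y = w then 0 else 3 * encV y + 1 with hcv
  set ce : Sym2 V → ℕ := fun e => if e ∈ TF then 0 else 3 * encE e + 2 with hce
  have hcvu : cv u = 0 := by rw [hcv]; simp
  have hcvw : cv w = 0 := by rw [hcv]; simp
  have hceuw : ce s(u, w) = 0 := by rw [hce]; simp [huwTF]
  have hcepa : ∀ y, y ≠ u → y ≠ w → ce s(pa y, y) = 0 := by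
    intro y h1 h2; rw [hce]; simp [hpaTF y h1 h2]
  have hcepa' : ∀ y, y ≠ u → y ≠ w → ce s(y, pa y) = 0 := by
    intro y h1 h2; rw [Sym2.eq_swap]; exact hcepa y h1 h2
  -- TMC
  have htmc : IsTMCColoring G ce cv := by
    intro a b hab
    by_cases hau : a = u
    · subst hau
      by_cases hbw : b = w
      · subst hbw; exact mono_one ce cv huw hceuw
      · rcases hpa b (Ne.symm hab) hbw with ⟨hpb | hpb, hadjb⟩
        · exact mono_one ce cv (hpb ▸ hadjb) (by rw [← hpb]; exact hcepa b (Ne.symm hab) hbw)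
        · exact mono_two ce cv huw (hpb ▸ hadjb) hab hceuw
            (by rw [← hpb]; exact hcepa b (Ne.symm hab) hbw) hcvw
    · by_cases haw : a = w
      · subst haw
        by_cases hbu : b = u
        · subst hbu; exact mono_one ce cv huw.symm (by rw [Sym2.eq_swap]; exact hceuw)
        · rcases hpa b hbu (Ne.symm hab) with ⟨hpb | hpb, hadjb⟩
          · exact mono_two ce cv huw.symm (hpb ▸ hadjb) hab
              (by rw [Sym2.eq_swap]; exact hceuw)
              (by rw [← hpb]; exact hcepa b hbu (Ne.symm hab)) hcvu
          · exact mono_one ce cv (hpb ▸ hadjb) (by rw [← hpb]; exact hcepa b hbu (Ne.symm hab))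
      · -- a is a leaf
        rcases hpa a hau haw with ⟨hpaa, hadja⟩
        by_cases hbu : b = u
        · subst hbu
          rcases hpaa with hp | hp
          · exact mono_one ce cv (hp ▸ hadja).symm
              (by rw [Sym2.eq_swap, ← hp]; exact hcepa a hau haw)
          · exact mono_two ce cv (hp ▸ hadja).symm huw.symm hau
              (by rw [Sym2.eq_swap, ← hp]; exact hcepa a hau haw)
              (by rw [Sym2.eq_swap]; exact hceuw) hcvw
        · by_cases hbw : b = w
          · subst hbw
            rcases hpaa with hp | hp
            · exact mono_two ce cv (hp ▸ hadja).symm huw haw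
                (by rw [Sym2.eq_swap, ← hp]; exact hcepa a hau haw) hceuw hcvu
            · exact mono_one ce cv (hp ▸ hadja).symm
                (by rw [Sym2.eq_swap, ← hp]; exact hcepa a hau haw)
          · rcases hpa b hbu hbw with ⟨hpab, hadjb⟩
            rcases hpaa with hp | hp <;> rcases hpab with hq | hq
            · exact mono_two ce cv (hp ▸ hadja).symm (hq ▸ hadjb) hab
                (by rw [Sym2.eq_swap, ← hp]; exact hcepa a hau haw)
                (by rw [← hq]; exact hcepa b hbu hbw) hcvu
            · exact mono_three ce cv (hp ▸ hadja).symm huw (hq ▸ hadjb) hab haw (Ne.symm hbu)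
                (by rw [Sym2.eq_swap, ← hp]; exact hcepa a hau haw) hceuw
                (by rw [← hq]; exact hcepa b hbu hbw) hcvu hcvw
            · exact mono_three ce cv (hp ▸ hadja).symm huw.symm (hq ▸ hadjb) hab hau
                (fun h => hbw h.symm)
                (by rw [Sym2.eq_swap, ← hp]; exact hcepa a hau haw)
                (by rw [Sym2.eq_swap]; exact hceuw)
                (by rw [← hq]; exact hcepa b hbu hbw) hcvw hcvu
            · exact mono_two ce cv (hp ▸ hadja).symm (hq ▸ hadjb) hab
                (by rw [Sym2.eq_swap, ← hp]; exact hcepa a hau haw)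
                (by rw [← hq]; exact hcepa b hbu hbw) hcvw
  -- counting
  have hcount : m ≤ colorsUsed G ce cv := by
    rw [colorsUsed_eq]
    set B : Finset ℕ :=
      insert 0 (((univ \ {u, w}).image cv) ∪ ((EF \ TF).image ce)) with hB
    have hBsub : B ⊆ EF.image ce ∪ univ.image cv := by
      intro c hc
      rw [hB] at hc
      rcases Finset.mem_insert.1 hc with rfl | hc
      · exact Finset.mem_union_left _
          (Finset.mem_image.2 ⟨s(u, w), hTFsub huwTF, hceuw⟩)
      · rcases Finset.mem_union.1 hc with hc | hc
        · rcases Finset.mem_image.1 hc with ⟨y, _, rfl⟩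
          exact Finset.mem_union_right _ (Finset.mem_image_of_mem cv (Finset.mem_univ y))
        · rcases Finset.mem_image.1 hc with ⟨e, he, rfl⟩
          exact Finset.mem_union_left _ (Finset.mem_image_of_mem ce (Finset.mem_sdiff.1 he).1)
    have hc1 : ((univ \ {u, w}).image cv).card = n - 2 := by
      rw [Finset.card_image_of_injOn, Finset.card_sdiff_of_subset (by simp), Finset.card_univ]
      · congr 1
        rw [Finset.card_insert_of_notMem (by simp [huwne]), Finset.card_singleton]
      · intro y hy y' hy' heq
        simp only [Finset.coe_sdiff, Set.mem_diff, Finset.coe_univ, Set.mem_univ, true_and,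
          Finset.coe_insert, Finset.coe_singleton, Set.mem_insert_iff, Set.mem_singleton_iff,
          not_or] at hy hy'
        rw [hcv] at heq
        simp only [if_neg (not_or.2 hy), if_neg (not_or.2 hy')] at heq
        exact hencV (by omega)
    have hc2 : ((EF \ TF).image ce).card = m - (n - 1) := by
      rw [Finset.card_image_of_injOn, Finset.card_sdiff_of_subset hTFsub, hTFcard]
      intro e he e' he' heq
      simp only [Finset.coe_sdiff, Set.mem_diff, Finset.mem_coe] at he he'
      rw [hce] at heq
      simp only [if_neg he.2, if_neg he'.2] at heq
      exact hencE (by omega)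
    have hdisj1 : Disjoint ((univ \ {u, w}).image cv) ((EF \ TF).image ce) := by
      rw [Finset.disjoint_left]
      rintro c hc hc'
      rcases Finset.mem_image.1 hc with ⟨y, hy, rfl⟩
      rcases Finset.mem_image.1 hc' with ⟨e, he, heq⟩
      simp only [Finset.mem_sdiff, Finset.mem_univ, true_and, Finset.mem_insert,
        Finset.mem_singleton, not_or] at hy
      have hA2 : cv y = 3 * encV y + 1 := by
        rw [hcv]; simp only [if_neg (not_or.2 hy)]
      have hB2 : ce e = 3 * encE e + 2 := by
        rw [hce]; simp only [if_neg (Finset.mem_sdiff.1 he).2]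
      omega
    have h0 : (0 : ℕ) ∉ ((univ \ {u, w}).image cv) ∪ ((EF \ TF).image ce) := by
      intro hc
      rcases Finset.mem_union.1 hc with hc | hc
      · rcases Finset.mem_image.1 hc with ⟨y, hy, heq⟩
        simp only [Finset.mem_sdiff, Finset.mem_univ, true_and, Finset.mem_insert,
          Finset.mem_singleton, not_or] at hy
        rw [hcv] at heq
        simp only [if_neg (not_or.2 hy)] at heq
        omega
      · rcases Finset.mem_image.1 hc with ⟨e, he, heq⟩
        rw [hce] at heq
        simp only [if_neg (Finset.mem_sdiff.1 he).2] at heq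
        omega
    have hBcard : B.card = 1 + ((n - 2) + (m - (n - 1))) := by
      rw [hB, Finset.card_insert_of_notMem h0, Finset.card_union_of_disjoint hdisj1, hc1, hc2]
      omega
    have hn1m : n - 1 ≤ m := by rw [← hTFcard]; exact Finset.card_le_card hTFsub
    have hn2 : 2 ≤ n := by
      rw [hn]
      exact Fintype.one_lt_card_iff_nontrivial.2 ⟨u, w, huwne⟩
    calc m ≤ B.card := by omega
      _ ≤ _ := Finset.card_le_card hBsub
  -- conclude
  have hmem : colorsUsed G ce cv ∈
      {k | ∃ ce cv, IsTMCColoring G ce cv ∧ colorsUsed G ce cv = k} := ⟨ce, cv, htmc, rfl⟩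
  have : colorsUsed G ce cv ≤ tmc G := le_csSup (tmc_bddAbove G) hmem
  have hms : G.edgeSet.ncard = m := by
    rw [hm, hEF, ← SimpleGraph.coe_edgeFinset, Set.ncard_coe_finset]
  omega
lemma compl_edge_card {V : Type} [Fintype V] (G : SimpleGraph V) [DecidableEq V]
    [DecidableRel G.Adj] [DecidableRel Gᶜ.Adj] :
    G.edgeFinset.card + Gᶜ.edgeFinset.card = (Fintype.card V).choose 2 := by
  classical
  have hU : G.edgeFinset ∪ Gᶜ.edgeFinset = (⊤ : SimpleGraph V).edgeFinset := by
    ext e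
    induction e using Sym2.ind with
    | _ a b =>
      simp only [Finset.mem_union, SimpleGraph.mem_edgeFinset, SimpleGraph.mem_edgeSet,
        SimpleGraph.compl_adj, SimpleGraph.top_adj]
      constructor
      · rintro (h | ⟨h, _⟩)
        · exact h.ne
        · exact h
      · intro h
        by_cases hadj : G.Adj a b
        · exact Or.inl hadj
        · exact Or.inr ⟨h, hadj⟩
  have hD : Disjoint G.edgeFinset Gᶜ.edgeFinset := by
    rw [Finset.disjoint_left]
    intro e he he'
    induction e using Sym2.ind with
    | _ a b =>
      simp only [SimpleGraph.mem_edgeFinset, SimpleGraph.mem_edgeSet,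
        SimpleGraph.compl_adj] at he he'
      exact he'.2 he
  rw [← SimpleGraph.card_edgeFinset_top_eq_card_choose_two, ← hU,
    Finset.card_union_of_disjoint hD]

lemma degree_le_card_edges {V : Type} [Fintype V] [DecidableEq V] (G : SimpleGraph V)
    [DecidableRel G.Adj] (v : V) : G.degree v ≤ G.edgeFinset.card := by
  rw [← SimpleGraph.card_incidenceFinset_eq_degree]
  apply Finset.card_le_card
  intro e he
  rw [SimpleGraph.mem_incidenceFinset] at he
  exact SimpleGraph.mem_edgeFinset.2 he.1

lemma bullet1 {V : Type} [Fintype V] (G : SimpleGraph V) (n : ℕ)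
    (hcard : Fintype.card V = n) (h7 : 7 ≤ n)
    (hdense : ∀ [DecidableRel Gᶜ.Adj], Gᶜ.edgeFinset.card ≤ n - 4) :
    G.edgeSet.ncard ≤ tmc G := by
  classical
  have hc' : Gᶜ.edgeFinset.card ≤ n - 4 := hdense
  -- find a vertex of complement-degree ≤ 1
  have hex : ∃ u : V, Gᶜ.degree u ≤ 1 := by
    by_contra hcon
    push_neg at hcon
    have h1 : (Finset.univ.card : ℕ) • 2 ≤ ∑ v : V, Gᶜ.degree v :=
      Finset.card_nsmul_le_sum _ _ _ (fun x _ => hcon x)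
    rw [SimpleGraph.sum_degrees_eq_twice_card_edges] at h1
    simp only [Finset.card_univ, hcard, smul_eq_mul] at h1
    omega
  obtain ⟨u, hu⟩ := hex
  have hn1 : 1 < Fintype.card V := by omega
  interval_cases hdeg : Gᶜ.degree u
  · -- u universal
    have huniv : ∀ y, y ≠ u → G.Adj u y := by
      intro y hy
      by_contra hadj
      have : y ∈ Gᶜ.neighborFinset u := by
        rw [SimpleGraph.mem_neighborFinset, SimpleGraph.compl_adj]
        exact ⟨fun h => hy h.symm, hadj⟩
      rw [← SimpleGraph.card_neighborFinset_eq_degree] at hdeg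
      rw [Finset.card_eq_zero.1 hdeg] at this
      exact absurd this (Finset.notMem_empty _)
    obtain ⟨w, hw⟩ := Fintype.exists_ne_of_one_lt_card hn1 u
    exact doubleStar G u w (huniv w hw) (fun _ => u)
      (fun y hyu _ => ⟨Or.inl rfl, huniv y hyu⟩)
  · -- u misses exactly one vertex x
    rw [← SimpleGraph.card_neighborFinset_eq_degree] at hdeg
    obtain ⟨x, hx⟩ := Finset.card_eq_one.1 hdeg
    have hxMem : x ∈ Gᶜ.neighborFinset u := by rw [hx]; simp
    rw [SimpleGraph.mem_neighborFinset, SimpleGraph.compl_adj] at hxMem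
    obtain ⟨hux, hnadj⟩ := hxMem
    have huniv : ∀ y, y ≠ u → y ≠ x → G.Adj u y := by
      intro y hyu hyx
      by_contra hadj
      have : y ∈ Gᶜ.neighborFinset u := by
        rw [SimpleGraph.mem_neighborFinset, SimpleGraph.compl_adj]
        exact ⟨fun h => hyu h.symm, hadj⟩
      rw [hx, Finset.mem_singleton] at this
      exact hyx this
    -- find w adjacent to x, w ∉ {u, x}
    have hdegx : Gᶜ.degree x ≤ n - 4 := le_trans (degree_le_card_edges _ x) hc'
    have hGdegx : 3 ≤ G.degree x := by
      have := SimpleGraph.degree_compl G x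
      have hle : G.degree x ≤ Fintype.card V - 1 := by
        rw [← SimpleGraph.card_neighborFinset_eq_degree]
        have : G.neighborFinset x ⊆ Finset.univ.erase x := by
          intro z hz
          rw [SimpleGraph.mem_neighborFinset] at hz
          exact Finset.mem_erase.2 ⟨hz.ne', Finset.mem_univ _⟩
        calc (G.neighborFinset x).card ≤ (Finset.univ.erase x).card := Finset.card_le_card this
          _ = Fintype.card V - 1 := by rw [Finset.card_erase_of_mem (Finset.mem_univ _)]; simp
      rw [hcard] at this hle
      omega
    have hwex : ((G.neighborFinset x).erase u).Nonempty := by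
      rw [← Finset.card_pos]
      have := Finset.card_erase_of_mem (s := G.neighborFinset x) (a := u)
      have hcardnb : (G.neighborFinset x).card = G.degree x :=
        SimpleGraph.card_neighborFinset_eq_degree _ _
      calc 0 < G.degree x - 1 := by omega
        _ ≤ ((G.neighborFinset x).erase u).card := by
            rw [Finset.erase_eq]
            have h2 := Finset.le_card_sdiff ({u} : Finset V) (G.neighborFinset x)
            simp only [Finset.card_singleton] at h2
            omega
    obtain ⟨w, hw⟩ := hwex
    have hwu : w ≠ u := (Finset.mem_erase.1 hw).1
    have hwadjx : G.Adj x w := by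
      have := (Finset.mem_erase.1 hw).2
      rwa [SimpleGraph.mem_neighborFinset] at this
    have hwx : w ≠ x := hwadjx.ne'
    have huw : G.Adj u w := huniv w (Ne.symm (fun h => hwu h.symm)) hwx
    refine doubleStar G u w huw (fun y => if y = x then w else u) ?_
    intro y hyu hyw
    by_cases hyx : y = x
    · subst hyx
      simp only [if_pos rfl]
      exact ⟨by simp, hwadjx.symm⟩
    · simp only [if_neg hyx]
      exact ⟨by simp, huniv y hyu hyx⟩
-- bullet 2 : the extremal graph
open Fin.NatCast in
lemma bullet2 (n k c ex : ℕ) (h7 : 7 ≤ n) (hk4 : 4 ≤ k)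
    (hex1 : 1 ≤ ex) (hexle : ex + 3 + n / 2 ≤ n) (hc : c = n / 2 + ex)
    (hkc : k - 1 + c = n.choose 2) :
    ∃ G : SimpleGraph (Fin n), G.Connected ∧ G.edgeSet.ncard = k - 1 ∧ tmc G < k := by
  classical
  haveI : NeZero n := ⟨by omega⟩
  set rel : Fin n → Fin n → Prop := fun a b =>
    a.val / 2 = b.val / 2 ∨ (a.val = 0 ∧ n - 1 - ex < b.val) ∨ (b.val = 0 ∧ n - 1 - ex < a.val)
    with hrel
  have hrelsymm : ∀ a b, rel a b → rel b a := by
    intro a b hab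
    rw [hrel] at *
    rcases hab with h | h | h
    · exact Or.inl h.symm
    · exact Or.inr (Or.inr h)
    · exact Or.inr (Or.inl h)
  set H : SimpleGraph (Fin n) := SimpleGraph.fromRel rel with hH
  set G : SimpleGraph (Fin n) := Hᶜ with hG
  have hGAdj : ∀ a b, G.Adj a b ↔ a ≠ b ∧ ¬ rel a b := by
    intro a b
    rw [hG, SimpleGraph.compl_adj, hH, SimpleGraph.fromRel_adj]
    constructor
    · rintro ⟨hne, h2⟩
      refine ⟨hne, fun hr => h2 ⟨hne, Or.inl hr⟩⟩
    · rintro ⟨hne, h2⟩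
      refine ⟨hne, fun hr => ?_⟩
      rcases hr.2 with h | h
      · exact h2 h
      · exact h2 (hrelsymm _ _ h)
  -- every vertex has a rel-partner
  have hcover : ∀ v : Fin n, ∃ u, v ≠ u ∧ ¬ G.Adj v u := by
    intro v
    have hvn : v.val < n := v.isLt
    by_cases hodd : v.val % 2 = 1
    · refine ⟨(⟨v.val - 1, by omega⟩ : Fin n), ?_, ?_⟩
      · intro hvu
        have := congrArg Fin.val hvu
        simp at this
        omega
      · rw [hGAdj]
        rintro ⟨_, hnr⟩
        apply hnr
        rw [hrel]
        left
        simp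
        omega
    · by_cases hlast : v.val + 1 < n
      · refine ⟨(⟨v.val + 1, hlast⟩ : Fin n), ?_, ?_⟩
        · intro hvu
          have := congrArg Fin.val hvu
          simp at this
        · rw [hGAdj]
          rintro ⟨_, hnr⟩
          apply hnr
          rw [hrel]
          left
          simp
          omega
      · -- v.val = n - 1, n odd (v even)
        refine ⟨(⟨0, by omega⟩ : Fin n), ?_, ?_⟩
        · intro hvu
          have := congrArg Fin.val hvu
          simp only [Fin.val_mk] at this
          omega
        · rw [hGAdj]
          rintro ⟨_, hnr⟩
          apply hnr
          rw [hrel]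
          right; right
          simp
          omega
  -- connectivity
  have hconn : G.Connected := by
    haveI : Nonempty (Fin n) := ⟨⟨0, by omega⟩⟩
    rw [SimpleGraph.connected_iff]
    refine ⟨?_, inferInstance⟩
    intro a b
    by_cases hab : a = b
    · exact hab ▸ SimpleGraph.Reachable.refl a
    · by_cases hadj : G.Adj a b
      · exact hadj.reachable
      · -- find a common neighbor
        set bad : Finset (Fin n) := univ.filter (fun z : Fin n =>
          z.val / 2 = a.val / 2 ∨ z.val / 2 = b.val / 2 ∨ z.val = 0 ∨ n - 1 - ex < z.val)
          with hbad
        have hbadcard : bad.card ≤ 5 + ex := by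
          have hsub : bad ⊆ (({2 * (a.val / 2), 2 * (a.val / 2) + 1, 2 * (b.val / 2),
              2 * (b.val / 2) + 1, 0} : Finset ℕ) ∪ Finset.Ioc (n - 1 - ex) (n - 1)).image
              (fun j : ℕ => (↑j : Fin n)) := by
            intro z hz
            rw [hbad, Finset.mem_filter] at hz
            refine Finset.mem_image.2 ⟨z.val, ?_, Fin.cast_val_eq_self z⟩
            have hzn : z.val < n := z.isLt
            rcases hz.2 with h | h | h | h
            · apply Finset.mem_union_left
              simp only [Finset.mem_insert, Finset.mem_singleton]
              omega
            · apply Finset.mem_union_left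
              simp only [Finset.mem_insert, Finset.mem_singleton]
              omega
            · apply Finset.mem_union_left
              simp only [Finset.mem_insert, Finset.mem_singleton]
              omega
            · apply Finset.mem_union_right
              rw [Finset.mem_Ioc]
              omega
          calc bad.card ≤ _ := Finset.card_le_card hsub
            _ ≤ _ := Finset.card_image_le
            _ ≤ ({2 * (a.val / 2), 2 * (a.val / 2) + 1, 2 * (b.val / 2),
                2 * (b.val / 2) + 1, 0} : Finset ℕ).card + (Finset.Ioc (n - 1 - ex) (n - 1)).card :=
                Finset.card_union_le _ _
            _ ≤ 5 + ex := by
                have h1 : ({2 * (a.val / 2), 2 * (a.val / 2) + 1, 2 * (b.val / 2),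
                    2 * (b.val / 2) + 1, 0} : Finset ℕ).card ≤ 5 := by
                  apply le_trans (Finset.card_insert_le _ _)
                  apply Nat.succ_le_succ
                  apply le_trans (Finset.card_insert_le _ _)
                  apply Nat.succ_le_succ
                  apply le_trans (Finset.card_insert_le _ _)
                  apply Nat.succ_le_succ
                  apply le_trans (Finset.card_insert_le _ _)
                  apply Nat.succ_le_succ
                  simp
                have h2 : (Finset.Ioc (n - 1 - ex) (n - 1)).card = (n-1) - (n-1-ex) := by
                  rw [Nat.card_Ioc]
                omega
        have hzex : (univ \ bad).Nonempty := by
          rw [← Finset.card_pos, Finset.card_sdiff_of_subset (Finset.subset_univ _), Finset.card_univ,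
            Fintype.card_fin]
          omega
        obtain ⟨z, hz⟩ := hzex
        simp only [hbad, Finset.mem_sdiff, Finset.mem_filter, Finset.mem_univ, true_and,
          not_or] at hz
        obtain ⟨hz1, hz2, hz3, hz4⟩ := hz
        have hadj1 : G.Adj a z := by
          rw [hGAdj]
          constructor
          · intro h; subst h; exact hz1 rfl
          · rw [hrel]
            rintro (h | ⟨h1, h2⟩ | ⟨h1, h2⟩)
            · exact hz1 h.symm
            · exact hz4 h2
            · exact hz3 h1
        have hadj2 : G.Adj z b := by
          rw [hGAdj]
          constructor
          · intro h; subst h; exact hz2 rfl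
          · rw [hrel]
            rintro (h | ⟨h1, h2⟩ | ⟨h1, h2⟩)
            · exact hz2 h
            · exact hz3 h1
            · exact hz4 h2
        exact (hadj1.reachable).trans hadj2.reachable
  -- edge count
  have hval : ∀ m : ℕ, m < n → ((m : Fin n) : ℕ) = m := fun m hm => Fin.val_cast_of_lt hm
  have hh3 : 3 ≤ n / 2 := by omega
  have hHcard : H.edgeFinset.card = c := by
    set f : ℕ → Sym2 (Fin n) := fun i => s(((2 * i : ℕ) : Fin n), ((2 * i + 1 : ℕ) : Fin n))
      with hf
    set g : ℕ → Sym2 (Fin n) := fun j => s((0 : Fin n), ((j : ℕ) : Fin n)) with hgdef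
    set F1 : Finset (Sym2 (Fin n)) := (Finset.range (n / 2)).image f with hF1
    set F2 : Finset (Sym2 (Fin n)) := (Finset.Ioc (n - 1 - ex) (n - 1)).image g with hF2
    have hrelmem : ∀ a b : Fin n, a ≠ b → rel a b → s(a, b) ∈ F1 ∪ F2 := by
      intro a b hne hr
      have han : a.val < n := a.isLt
      have hbn : b.val < n := b.isLt
      have hvne : a.val ≠ b.val := fun h => hne (Fin.ext h)
      rw [hrel] at hr
      rcases hr with h | ⟨h1, h2⟩ | ⟨h1, h2⟩
      · -- matching pair
        apply Finset.mem_union_left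
        rw [hF1]
        set q := a.val / 2 with hq
        have hq2 : q < n / 2 := by omega
        refine Finset.mem_image.2 ⟨q, Finset.mem_range.2 hq2, ?_⟩
        rw [hf]
        simp only
        have hcasts : ((2 * q : ℕ) : Fin n).val = 2 * q := hval _ (by omega)
        have hcasts2 : ((2 * q + 1 : ℕ) : Fin n).val = 2 * q + 1 := hval _ (by omega)
        rcases (by omega : (a.val = 2 * q ∧ b.val = 2 * q + 1) ∨
            (a.val = 2 * q + 1 ∧ b.val = 2 * q)) with ⟨ha, hb⟩ | ⟨ha, hb⟩
        · rw [show ((2 * q : ℕ) : Fin n) = a from Fin.ext (by omega),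
            show ((2 * q + 1 : ℕ) : Fin n) = b from Fin.ext (by omega)]
        · rw [show ((2 * q : ℕ) : Fin n) = b from Fin.ext (by omega),
            show ((2 * q + 1 : ℕ) : Fin n) = a from Fin.ext (by omega)]
          exact Sym2.eq_swap
      · -- extra edge, a = 0
        apply Finset.mem_union_right
        rw [hF2]
        refine Finset.mem_image.2 ⟨b.val, Finset.mem_Ioc.2 ⟨h2, by omega⟩, ?_⟩
        rw [hgdef]
        simp only
        rw [show ((b.val : ℕ) : Fin n) = b from Fin.cast_val_eq_self b,
          show (0 : Fin n) = a from Fin.ext (by simp [h1])]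
      · -- extra edge, b = 0
        apply Finset.mem_union_right
        rw [hF2]
        refine Finset.mem_image.2 ⟨a.val, Finset.mem_Ioc.2 ⟨h2, by omega⟩, ?_⟩
        rw [hgdef]
        simp only
        rw [show ((a.val : ℕ) : Fin n) = a from Fin.cast_val_eq_self a,
          show (0 : Fin n) = b from Fin.ext (by simp [h1])]
        exact Sym2.eq_swap
    have hFeq : H.edgeFinset = F1 ∪ F2 := by
      ext e
      induction e using Sym2.ind with
      | _ a b =>
        rw [SimpleGraph.mem_edgeFinset, hH, SimpleGraph.mem_edgeSet, SimpleGraph.fromRel_adj]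
        constructor
        · rintro ⟨hne, hr | hr⟩
          · exact hrelmem a b hne hr
          · rw [Sym2.eq_swap]
            exact hrelmem b a (Ne.symm hne) hr
        · intro hmem
          rcases Finset.mem_union.1 hmem with hm | hm
          · rw [hF1] at hm
            rcases Finset.mem_image.1 hm with ⟨i, hi, heq⟩
            rw [Finset.mem_range] at hi
            rw [hf] at heq
            simp only at heq
            have hc1 : ((2 * i : ℕ) : Fin n).val = 2 * i := hval _ (by omega)
            have hc2 : ((2 * i + 1 : ℕ) : Fin n).val = 2 * i + 1 := hval _ (by omega)
            rcases Sym2.eq_iff.1 heq with ⟨ha, hb⟩ | ⟨ha, hb⟩ <;>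
            · constructor
              · intro h
                rw [← ha, ← hb] at h
                have := congrArg Fin.val h
                omega
              · left
                rw [hrel]
                left
                rw [← ha, ← hb, hc1, hc2]
                omega
          · rw [hF2] at hm
            rcases Finset.mem_image.1 hm with ⟨j, hj, heq⟩
            rw [Finset.mem_Ioc] at hj
            rw [hgdef] at heq
            simp only at heq
            have hc1 : ((j : ℕ) : Fin n).val = j := hval _ (by omega)
            have hc0 : (0 : Fin n).val = 0 := by simp
            rcases Sym2.eq_iff.1 heq with ⟨ha, hb⟩ | ⟨ha, hb⟩
            · constructor
              · intro h
                rw [← ha, ← hb] at h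
                have := congrArg Fin.val h
                omega
              · left
                rw [hrel]
                right; left
                rw [← ha, ← hb, hc1, hc0]
                omega
            · constructor
              · intro h
                rw [← ha, ← hb] at h
                have := congrArg Fin.val h
                omega
              · left
                rw [hrel]
                right; right
                rw [← ha, ← hb, hc1, hc0]
                omega
    have hdisj : Disjoint F1 F2 := by
      rw [Finset.disjoint_left]
      intro e he1 he2
      rw [hF1] at he1
      rw [hF2] at he2
      rcases Finset.mem_image.1 he1 with ⟨i, hi, heq1⟩
      rcases Finset.mem_image.1 he2 with ⟨j, hj, heq2⟩
      rw [Finset.mem_range] at hi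
      rw [Finset.mem_Ioc] at hj
      rw [hf] at heq1
      rw [hgdef] at heq2
      simp only at heq1 heq2
      have hc1 : ((2 * i : ℕ) : Fin n).val = 2 * i := hval _ (by omega)
      have hc2 : ((2 * i + 1 : ℕ) : Fin n).val = 2 * i + 1 := hval _ (by omega)
      have hcj : ((j : ℕ) : Fin n).val = j := hval _ (by omega)
      have hc0 : (0 : Fin n).val = 0 := by simp
      rw [← heq2] at heq1
      rcases Sym2.eq_iff.1 heq1 with ⟨ha, hb⟩ | ⟨ha, hb⟩
      · have h1 := congrArg Fin.val ha
        have h2 := congrArg Fin.val hb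
        omega
      · have h1 := congrArg Fin.val ha
        have h2 := congrArg Fin.val hb
        omega
    have hcard1 : F1.card = n / 2 := by
      rw [hF1, Finset.card_image_of_injOn, Finset.card_range]
      intro i hi i' hi' heq
      simp only [Finset.coe_range, Set.mem_Iio] at hi hi'
      rw [hf] at heq
      simp only at heq
      have hc1 : ((2 * i : ℕ) : Fin n).val = 2 * i := hval _ (by omega)
      have hc2 : ((2 * i + 1 : ℕ) : Fin n).val = 2 * i + 1 := hval _ (by omega)
      have hc3 : ((2 * i' : ℕ) : Fin n).val = 2 * i' := hval _ (by omega)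
      have hc4 : ((2 * i' + 1 : ℕ) : Fin n).val = 2 * i' + 1 := hval _ (by omega)
      rcases Sym2.eq_iff.1 heq with ⟨ha, hb⟩ | ⟨ha, hb⟩
      · have h1 := congrArg Fin.val ha
        omega
      · have h1 := congrArg Fin.val ha
        have h2 := congrArg Fin.val hb
        omega
    have hcard2 : F2.card = ex := by
      rw [hF2, Finset.card_image_of_injOn, Nat.card_Ioc]
      · omega
      · intro j hj j' hj' heq
        simp only [Finset.coe_Ioc, Set.mem_Ioc] at hj hj'
        rw [hgdef] at heq
        simp only at heq
        have hc1 : ((j : ℕ) : Fin n).val = j := hval _ (by omega)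
        have hc2 : ((j' : ℕ) : Fin n).val = j' := hval _ (by omega)
        have hc0 : (0 : Fin n).val = 0 := by simp
        rcases Sym2.eq_iff.1 heq with ⟨ha, hb⟩ | ⟨ha, hb⟩
        · have h1 := congrArg Fin.val hb
          omega
        · have h1 := congrArg Fin.val ha
          have h2 := congrArg Fin.val hb
          omega
    rw [hFeq, Finset.card_union_of_disjoint hdisj, hcard1, hcard2]
    omega
  have hGcard : G.edgeFinset.card = k - 1 := by
    have h1 := compl_edge_card H
    have h2 : Hᶜ.edgeFinset.card = G.edgeFinset.card := rfl
    rw [Fintype.card_fin] at h1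
    omega
  have hGncard : G.edgeSet.ncard = k - 1 := by
    rw [← SimpleGraph.coe_edgeFinset, Set.ncard_coe_finset, hGcard]
  refine ⟨G, hconn, hGncard, ?_⟩
  have := tmc_le G hcover
  omega
theorem stmt17 (n k : ℕ) (hk1 : n.choose 2 - n + 4 ≤ k)
    (hk2 : k ≤ n.choose 2 + n - 3 * (n / 2))
    (hexc : ¬(Odd n ∧ k = n.choose 2 + n - 3 * (n / 2))) :
    (∀ (V : Type) [Fintype V] (G : SimpleGraph V), G.Connected →
      Fintype.card V = n → k ≤ G.edgeSet.ncard → k ≤ tmc G) ∧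
    (∃ G : SimpleGraph (Fin n), G.Connected ∧
      G.edgeSet.ncard = k - 1 ∧ tmc G < k) := by
  have hexc' : n % 2 = 1 → k ≠ n.choose 2 + n - 3 * (n / 2) := by
    intro hodd hkeq
    exact hexc ⟨Nat.odd_iff.2 hodd, hkeq⟩
  have h7 : 7 ≤ n := by
    by_contra h
    push_neg at h
    interval_cases n <;> first
      | omega
      | (norm_num [Nat.choose] at hk1 hk2 hexc' ⊢; omega)
  have hC2 : n.choose 2 * 2 = n * (n - 1) := by
    rw [Nat.choose_two_right]
    apply Nat.div_mul_cancel
    rcases Nat.even_or_odd n with ⟨t, ht⟩ | ⟨t, ht⟩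
    · exact Dvd.intro (t * (n - 1)) (by rw [ht]; ring)
    · exact Dvd.intro (n * t) (by rw [show n - 1 = 2 * t from by omega]; ring)
  have hCn : n ≤ n.choose 2 := by
    have h1 : n * 2 ≤ n * (n - 1) := Nat.mul_le_mul_left n (by omega)
    omega
  constructor
  · -- first part
    intro V _ G hconn hcard hke
    classical
    have hm : G.edgeSet.ncard = G.edgeFinset.card := by
      rw [← SimpleGraph.coe_edgeFinset, Set.ncard_coe_finset]
    have hcompl := compl_edge_card G
    rw [hcard] at hcompl
    have hnc : Gᶜ.edgeSet.ncard = Gᶜ.edgeFinset.card := by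
      rw [← SimpleGraph.coe_edgeFinset, Set.ncard_coe_finset]
    have hdense0 : Gᶜ.edgeSet.ncard ≤ n - 4 := by
      rw [hnc]
      omega
    calc k ≤ G.edgeSet.ncard := hke
      _ ≤ tmc G := by
          apply bullet1 G n hcard h7
          intro hdec
          have : Gᶜ.edgeFinset.card = Gᶜ.edgeSet.ncard := by
            rw [← SimpleGraph.coe_edgeFinset, Set.ncard_coe_finset]
          omega
  · -- second part
    set c := n.choose 2 + 1 - k with hcdef
    set ex := c - n / 2 with hexdef
    apply bullet2 n k c ex h7 (by omega) (by omega) (by omega) (by omega)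
    omega
end
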